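/- arXiv:1608.06976 — 3 statements merged into one kernel-verified Lean document; each statement's English description precedes it below -/
import Mathlib

section
/- Let α ∈ ℂ ∖ {−1,−2,…} and let u ∈ ℂ be neither 0 nor a zero of 𝕀_{α+1}. The Apostol–Euler–Dunkl polynomials satisfy, for every n ≥ 0 and all x ∈ ℂ, the recurrence xⁿ = (2(1+α)γ_{n,α}/(u 𝕀_{α+1}(u))) ∑_{j=0}^{n} (𝔈_{j,α,u}(x)/(γ_{j,α}(n−j)!)) · 𝕀_α^{(n−j+1)}(u), where 𝕀_α^{(m)} denotes the m-th derivative of 𝕀_α. Moreover Λ_α(𝔈_{n,α,u}) = (n + (α+1/2)(1−(−1)ⁿ)) 𝔈_{n−1,α,u} for every n ≥ 1. -/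
open Complex Polynomial Finset Filter Topology

/-- `γ_{n,α}` from the Dunkl setting: `γ_{2k,α} = 2^{2k} k! (α+1)_k`,
`γ_{2k+1,α} = 2^{2k+1} k! (α+1)_{k+1}`. -/
noncomputable def gamDunkl (α : ℂ) (n : ℕ) : ℂ :=
  if n % 2 = 0 then
    (2:ℂ)^n * (Nat.factorial (n/2) : ℂ) * (ascPochhammer ℂ (n/2)).eval (α+1)
  else
    (2:ℂ)^n * (Nat.factorial (n/2) : ℂ) * (ascPochhammer ℂ (n/2+1)).eval (α+1)

/-- `𝕀_α(z) = Γ(α+1) ∑_{n≥0} (z/2)^{2n} / (n! Γ(n+α+1))`. -/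
noncomputable def modI (α z : ℂ) : ℂ :=
  Complex.Gamma (α+1) *
    ∑' n : ℕ, (z/2)^(2*n) / ((Nat.factorial n : ℂ) * Complex.Gamma ((n:ℂ) + α + 1))

/-- The Dunkl kernel `E_α(z) = 𝕀_α(z) + (z/(2(α+1))) 𝕀_{α+1}(z)`. -/
noncomputable def dunklKer (α z : ℂ) : ℂ :=
  modI α z + z / (2*(α+1)) * modI (α+1) z

/-- The Dunkl operator `Λ_α` acting on polynomials. -/
noncomputable def dunklPoly (α : ℂ) (p : Polynomial ℂ) : Polynomial ℂ :=
  Polynomial.derivative p + Polynomial.C ((2*α+1)/2) * (p - p.comp (-Polynomial.X)).divX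

namespace AED

noncomputable def Ic (β : ℂ) (n : ℕ) : ℂ :=
  if n % 2 = 0 then ((2:ℂ)^n * (Nat.factorial (n/2) : ℂ) * (ascPochhammer ℂ (n/2)).eval (β+1))⁻¹
  else 0

variable {β : ℂ}

lemma poch_eval_succ (k : ℕ) (x : ℂ) :
    (ascPochhammer ℂ (k+1)).eval x = (ascPochhammer ℂ k).eval x * (x + k) := by
  rw [ascPochhammer_succ_right]
  simp

lemma poch_eval_succ_left (k : ℕ) (x : ℂ) :
    (ascPochhammer ℂ (k+1)).eval x = x * (ascPochhammer ℂ k).eval (x+1) := by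
  rw [ascPochhammer_succ_left]
  simp [Polynomial.eval_comp]

lemma poch_ne_zero (hβ : ∀ m : ℕ, β + 1 ≠ -(m:ℂ)) (k : ℕ) :
    (ascPochhammer ℂ k).eval (β+1) ≠ 0 := by
  induction k with
  | zero => simp
  | succ k ih =>
      rw [poch_eval_succ]
      refine mul_ne_zero ih ?_
      intro h
      exact hβ k (by linear_combination h)

lemma Gamma_poch (hβ : ∀ m : ℕ, β + 1 ≠ -(m:ℂ)) (k : ℕ) :
    Complex.Gamma ((k:ℂ) + β + 1) = (ascPochhammer ℂ k).eval (β+1) * Complex.Gamma (β+1) := by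
  induction k with
  | zero => simp
  | succ k ih =>
      have hne : (k:ℂ) + β + 1 ≠ 0 := by
        intro h; exact hβ k (by linear_combination h)
      have : ((k:ℂ)+1) + β + 1 = ((k:ℂ) + β + 1) + 1 := by ring
      rw [Nat.cast_succ, this, Complex.Gamma_add_one _ hne, ih, poch_eval_succ]
      ring

lemma Gamma_ne (hβ : ∀ m : ℕ, β + 1 ≠ -(m:ℂ)) : Complex.Gamma (β+1) ≠ 0 :=
  Complex.Gamma_ne_zero (fun m => by simpa using hβ m)

/-- summability of the hypergeometric-type series -/
lemma summable_aux (hβ : ∀ m : ℕ, β + 1 ≠ -(m:ℂ)) (w : ℂ) :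
    Summable (fun k : ℕ => w^k / ((Nat.factorial k : ℂ) * (ascPochhammer ℂ k).eval (β+1))) := by
  rcases eq_or_ne w 0 with rfl | hw
  · apply summable_of_ne_finset_zero (s := {0})
    intro k hk
    have : k ≠ 0 := by simpa using hk
    simp [zero_pow this]
  · set f : ℕ → ℂ := fun k => w^k / ((Nat.factorial k : ℂ) * (ascPochhammer ℂ k).eval (β+1))
      with hf
    have hfne : ∀ k, f k ≠ 0 := by
      intro k
      apply div_ne_zero (pow_ne_zero _ hw)
      exact mul_ne_zero (Nat.cast_ne_zero.2 (Nat.factorial_ne_zero k)) (poch_ne_zero hβ k)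
    apply summable_of_ratio_test_tendsto_lt_one one_pos (Eventually.of_forall hfne)
    have hkne : ∀ k : ℕ, ((k:ℂ)+1) ≠ 0 := by
      intro k
      have := (Nat.cast_ne_zero (R := ℂ)).2 k.succ_ne_zero
      push_cast at this; exact this
    have hbne : ∀ k : ℕ, (β + 1 + k) ≠ 0 := by
      intro k h; exact hβ k (by linear_combination h)
    have hratio : ∀ k : ℕ, ‖f (k+1)‖ / ‖f k‖ = ‖w‖ / (((k:ℝ)+1) * ‖β + 1 + k‖) := by
      intro k
      have h1 : f (k+1) = f k * (w / (((k:ℂ)+1) * (β + 1 + k))) := by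
        have hp : (ascPochhammer ℂ k).eval (β+1) ≠ 0 := poch_ne_zero hβ k
        have hfk : (Nat.factorial k : ℂ) ≠ 0 := Nat.cast_ne_zero.2 (Nat.factorial_ne_zero k)
        simp only [hf, poch_eval_succ, Nat.factorial_succ, Nat.cast_mul, pow_succ]
        push_cast
        field_simp
      rw [h1, norm_mul, mul_comm, mul_div_assoc,
        div_self (by simpa using norm_ne_zero_iff.2 (hfne k)), mul_one, norm_div, norm_mul]
      congr 2
      have : ((k:ℂ)+1) = ((k+1 : ℕ) : ℂ) := by push_cast; ring
      rw [this, Complex.norm_natCast]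
      push_cast; ring
    simp only [hratio]
    have hden : Tendsto (fun k : ℕ => ((k:ℝ)+1) * ‖β + 1 + k‖) atTop atTop := by
      apply tendsto_atTop_mono' atTop (f₁ := fun k : ℕ => (k:ℝ) - ‖β+1‖)
      · filter_upwards [eventually_ge_atTop (⌈‖β+1‖⌉₊ + 1)] with k hk
        have h1 : ‖β+1‖ ≤ (k:ℝ) := by
          calc ‖β+1‖ ≤ (⌈‖β+1‖⌉₊ : ℝ) := Nat.le_ceil _
          _ ≤ (k:ℝ) := by exact_mod_cast Nat.le_of_succ_le hk
        have h2 : (k:ℝ) - ‖β+1‖ ≤ ‖β + 1 + k‖ := by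
          have h := norm_sub_norm_le (k:ℂ) (-(β+1))
          rw [sub_neg_eq_add, norm_neg] at h
          rw [Complex.norm_natCast] at h
          have : ((k:ℂ) + (β+1)) = β + 1 + k := by ring
          rw [this] at h
          linarith
        calc (k:ℝ) - ‖β+1‖ ≤ ‖β + 1 + k‖ := h2
        _ ≤ ((k:ℝ)+1) * ‖β + 1 + k‖ := by
            nlinarith [norm_nonneg ((β:ℂ) + 1 + k), (Nat.cast_nonneg k : (0:ℝ) ≤ k)]
      · apply tendsto_atTop_add_const_right
        exact tendsto_natCast_atTop_atTop
    simpa using (tendsto_const_nhds.div_atTop hden)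

lemma hasSum_even_ext {F : ℕ → ℂ} {S : ℂ} (h0 : ∀ k, F (2*k+1) = 0)
    (h : HasSum (fun k => F (2*k)) S) : HasSum F S := by
  have hinj : Function.Injective (fun k : ℕ => 2*k) := fun a b hab => by
    simpa using hab
  refine (Function.Injective.hasSum_iff hinj ?_).mp h
  intro x hx
  rcases Nat.even_or_odd x with ⟨k, hk⟩ | ⟨k, hk⟩
  · exact absurd ⟨k, show 2*k = x by omega⟩ hx
  · rw [show x = 2*k+1 by omega]; exact h0 k

lemma hasSum_odd_ext {F : ℕ → ℂ} {S : ℂ} (h0 : ∀ k, F (2*k) = 0)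
    (h : HasSum (fun k => F (2*k+1)) S) : HasSum F S := by
  have hinj : Function.Injective (fun k : ℕ => 2*k+1) := fun a b hab => by
    simpa using hab
  refine (Function.Injective.hasSum_iff hinj ?_).mp h
  intro x hx
  rcases Nat.even_or_odd x with ⟨k, hk⟩ | ⟨k, hk⟩
  · rw [show x = 2*k by omega]; exact h0 k
  · exact absurd ⟨k, show 2*k+1 = x by omega⟩ hx

lemma hasSum_evens {F : ℕ → ℂ} {S : ℂ} (h : HasSum F S) (h0 : ∀ k, F (2*k+1) = 0) :
    HasSum (fun k => F (2*k)) S := by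
  have hinj : Function.Injective (fun k : ℕ => 2*k) := fun a b hab => by
    simpa using hab
  refine (Function.Injective.hasSum_iff hinj ?_).mpr h
  intro x hx
  rcases Nat.even_or_odd x with ⟨k, hk⟩ | ⟨k, hk⟩
  · exact absurd ⟨k, show 2*k = x by omega⟩ hx
  · rw [show x = 2*k+1 by omega]; exact h0 k

lemma hasSum_modI (hβ : ∀ m : ℕ, β + 1 ≠ -(m:ℂ)) (z : ℂ) :
    HasSum (fun k : ℕ => (z^2/4)^k / ((Nat.factorial k : ℂ) * (ascPochhammer ℂ k).eval (β+1)))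
      (modI β z) := by
  have hsum := summable_aux hβ (z^2/4)
  have heq : (fun k : ℕ => (z/2)^(2*k) / ((Nat.factorial k : ℂ) * Complex.Gamma ((k:ℂ) + β + 1)))
      = fun k => ((z^2/4)^k / ((Nat.factorial k : ℂ) * (ascPochhammer ℂ k).eval (β+1)))
          * (Complex.Gamma (β+1))⁻¹ := by
    funext k
    rw [Gamma_poch hβ k, pow_mul]
    have : (z/2)^2 = z^2/4 := by ring
    rw [this]
    field_simp
  rw [show modI β z = Complex.Gamma (β+1) *
      ∑' k : ℕ, (z/2)^(2*k) / ((Nat.factorial k : ℂ) * Complex.Gamma ((k:ℂ) + β + 1)) from rfl,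
    heq, tsum_mul_right]
  have hG := Gamma_ne hβ
  have hv : Complex.Gamma (β+1) * ((∑' k : ℕ,
      (z^2/4)^k / ((Nat.factorial k : ℂ) * (ascPochhammer ℂ k).eval (β+1)))
        * (Complex.Gamma (β+1))⁻¹)
      = ∑' k : ℕ, (z^2/4)^k / ((Nat.factorial k : ℂ) * (ascPochhammer ℂ k).eval (β+1)) := by
    field_simp
  rw [hv]
  exact hsum.hasSum

lemma hasSum_modI' (hβ : ∀ m : ℕ, β + 1 ≠ -(m:ℂ)) (z : ℂ) :
    HasSum (fun n : ℕ => Ic β n * z^n) (modI β z) := by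
  apply hasSum_even_ext (fun k => by
    have h1 : (2*k+1) % 2 = 1 := by omega
    simp [Ic, h1])
  · have h := hasSum_modI hβ z
    convert h using 2 with k
    have h1 : (2*k) % 2 = 0 := Nat.mul_mod_right 2 k
    have h2 : (2*k) / 2 = k := by omega
    simp only [Ic, h1, if_pos rfl, if_true, h2]
    rw [pow_mul, div_pow]
    have : (4:ℂ) = 2^2 := by norm_num
    rw [this, ← pow_mul]
    have hp := poch_ne_zero hβ k
    have hf : ((Nat.factorial k : ℂ)) ≠ 0 := Nat.cast_ne_zero.2 (Nat.factorial_ne_zero k)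
    have h2k : ((2:ℂ))^(2*k) ≠ 0 := pow_ne_zero _ two_ne_zero
    field_simp
    ring

lemma hasFPS (hβ : ∀ m : ℕ, β + 1 ≠ -(m:ℂ)) :
    HasFPowerSeriesOnBall (modI β) (FormalMultilinearSeries.ofScalars ℂ (Ic β)) 0 ⊤ := by
  constructor
  · rw [top_le_iff, eq_top_iff]
    apply ENNReal.le_of_forall_nnreal_lt
    intro r _
    apply FormalMultilinearSeries.le_radius_of_summable
    have h := (hasSum_modI' hβ ((r:ℝ):ℂ)).summable.norm
    convert h using 2 with n
    rw [FormalMultilinearSeries.ofScalars_norm, norm_mul, norm_pow, Complex.norm_real,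
      Real.norm_of_nonneg r.coe_nonneg]
  · exact ENNReal.zero_lt_top
  · intro y _
    rw [zero_add]
    have h := hasSum_modI' hβ y
    convert h using 2 with n
    · rfl
    · rw [FormalMultilinearSeries.ofScalars_apply_eq, smul_eq_mul]

lemma differentiable_modI (hβ : ∀ m : ℕ, β + 1 ≠ -(m:ℂ)) : Differentiable ℂ (modI β) :=
  fun z => ((hasFPS hβ).analyticAt_of_mem (EMetric.mem_ball.mpr (edist_lt_top _ _))).differentiableAt

lemma deriv_modI (hβ : ∀ m : ℕ, β + 1 ≠ -(m:ℂ)) :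
    deriv (modI β) = fun z => z / (2*(β+1)) * modI (β+1) z := by
  have hβ' : ∀ m : ℕ, (β+1) + 1 ≠ -(m:ℂ) := by
    intro m h; exact hβ (m+1) (by push_cast; linear_combination h)
  have hb1 : (β+1) ≠ 0 := fun h => hβ 0 (by simpa using h)
  set p := FormalMultilinearSeries.ofScalars ℂ (Ic β) with hp
  have hball := hasFPS hβ
  have hfd := hball.fderiv
  set g : ℂ → ℂ := fun z => z / (2*(β+1)) * modI (β+1) z with hg
  have key : ∀ y : ℂ, y * deriv (modI β) y = y * g y := by
    intro y
    have hs := hfd.hasSum (y := y) (EMetric.mem_ball.mpr (edist_lt_top _ _))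
    rw [zero_add] at hs
    have hs2 := (ContinuousLinearMap.apply ℂ ℂ y).hasSum hs
    have hterm : (fun n => (ContinuousLinearMap.apply ℂ ℂ y) ((p.derivSeries n) fun _ => y))
        = fun n : ℕ => ((n:ℂ)+1) * Ic β (n+1) * y^(n+1 : ℕ) := by
      funext n
      simp only [ContinuousLinearMap.apply_apply]
      rw [p.derivSeries_apply_diag n y, FormalMultilinearSeries.ofScalars_apply_eq]
      simp only [smul_eq_mul, nsmul_eq_mul]
      push_cast
      ring
    have hval : (ContinuousLinearMap.apply ℂ ℂ y) (fderiv ℂ (modI β) y)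
        = y * deriv (modI β) y := by
      simp only [ContinuousLinearMap.apply_apply]
      calc (fderiv ℂ (modI β) y) y = (fderiv ℂ (modI β) y) (y • 1) := by
            rw [smul_eq_mul, mul_one]
        _ = y • (fderiv ℂ (modI β) y) 1 := by rw [map_smul]
        _ = y * deriv (modI β) y := by rw [smul_eq_mul, fderiv_apply_one_eq_deriv]
    rw [hterm, hval] at hs2
    have halt : HasSum (fun n : ℕ => ((n:ℂ)+1) * Ic β (n+1) * y^(n+1 : ℕ)) (y * g y) := by
      have h0 := (hasSum_modI' hβ' y).mul_left (y^2 / (2*(β+1)))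
      have h1 := hasSum_evens h0 (fun k => by
        have h2 : (2*k+1) % 2 = 1 := by omega
        simp [Ic, h2])
      have hv : y^2 / (2*(β+1)) * modI (β+1) y = y * g y := by
        rw [hg]; ring
      rw [hv] at h1
      apply hasSum_odd_ext
      · intro k
        have h2 : (2*k+1) % 2 = 1 := by omega
        simp [Ic, h2]
      · convert h1 using 2 with k
        have e1 : (2*k+1+1) % 2 = 0 := by omega
        have e2 : (2*k+1+1) / 2 = k+1 := by omega
        have e3 : (2*k) % 2 = 0 := by omega
        have e4 : (2*k) / 2 = k := by omega
        simp only [Ic, e1, e2, e3, e4, if_pos rfl, if_true]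
        rw [poch_eval_succ_left k (β+1)]
        have hP : (ascPochhammer ℂ k).eval (β+1+1) ≠ 0 := poch_ne_zero hβ' k
        have hf : ((Nat.factorial k : ℂ)) ≠ 0 := Nat.cast_ne_zero.2 (Nat.factorial_ne_zero k)
        have h2k : ((2:ℂ))^(2*k) ≠ 0 := pow_ne_zero _ two_ne_zero
        have hfs : ((Nat.factorial (k+1) : ℂ)) = ((k:ℂ)+1) * (Nat.factorial k : ℂ) := by
          rw [Nat.factorial_succ]; push_cast; ring
        rw [hfs]
        have hkk : ((k:ℂ)+1) ≠ 0 := by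
          have := (Nat.cast_ne_zero (R := ℂ)).2 k.succ_ne_zero
          push_cast at this; exact this
        field_simp
        push_cast
        ring
    exact hs2.unique halt
  have hcd : Continuous (deriv (modI β)) := by
    have h1 : ContinuousOn (fderiv ℂ (modI β)) (Metric.eball (0:ℂ) ⊤) := hfd.continuousOn
    rw [Metric.eball_top] at h1
    have h2 : Continuous (fderiv ℂ (modI β)) := continuousOn_univ.mp h1
    have h3 : Continuous fun y => (fderiv ℂ (modI β) y) 1 := h2.clm_apply continuous_const
    have h4 : (fun y => (fderiv ℂ (modI β) y) 1) = deriv (modI β) := by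
      funext y; rw [fderiv_apply_one_eq_deriv]
    rw [h4] at h3; exact h3
  have hgc : Continuous g := by
    apply Continuous.mul
    · exact continuous_id.div_const _
    · exact (differentiable_modI hβ').continuous
  apply Continuous.ext_on (dense_compl_singleton (0:ℂ)) hcd hgc
  intro y hy
  have hyne : y ≠ 0 := hy
  exact mul_left_cancel₀ hyne (key y)

variable {α : ℂ}

/-- Taylor coefficients (times `2(α+1)`) of the denominator at `u`. -/
noncomputable def cD (α u : ℂ) (m : ℕ) : ℂ :=
  2*(α+1) * iteratedDeriv (m+1) (modI α) u / (Nat.factorial m : ℂ)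

lemma hα_succ (hA : ∀ m : ℕ, α + 1 ≠ -(m:ℂ)) : ∀ m : ℕ, (α+1) + 1 ≠ -(m:ℂ) := by
  intro m h; exact hA (m+1) (by push_cast; linear_combination h)

lemma hasSum_cD (hA : ∀ m : ℕ, α + 1 ≠ -(m:ℂ)) (u t : ℂ) :
    HasSum (fun m : ℕ => cD α u m * t^m) ((t+u) * modI (α+1) (t+u)) := by
  have hb1 : (α+1) ≠ 0 := fun h => hA 0 (by simpa using h)
  have hg : Differentiable ℂ (deriv (modI α)) := by
    rw [deriv_modI hA]
    exact (differentiable_id.div_const _).mul (differentiable_modI (hα_succ hA))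
  have h := Complex.hasSum_taylorSeries_of_entire hg u (t+u)
  have hval : deriv (modI α) (t+u) = (t+u)/(2*(α+1)) * modI (α+1) (t+u) := by
    rw [deriv_modI hA]
  rw [hval] at h
  have h2 := h.mul_left (2*(α+1))
  have hv2 : 2*(α+1) * ((t+u)/(2*(α+1)) * modI (α+1) (t+u)) = (t+u) * modI (α+1) (t+u) := by
    field_simp
  rw [hv2] at h2
  convert h2 using 2 with m
  · rfl
  · simp only [smul_eq_mul, add_sub_cancel_right, ← iteratedDeriv_succ', cD]
    ring

lemma gam_even (k : ℕ) : gamDunkl α (2*k)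
    = (2:ℂ)^(2*k) * (Nat.factorial k : ℂ) * (ascPochhammer ℂ k).eval (α+1) := by
  have e3 : (2*k) % 2 = 0 := by omega
  have e4 : (2*k) / 2 = k := by omega
  simp [gamDunkl, e3, e4]

lemma gam_odd (k : ℕ) : gamDunkl α (2*k+1)
    = (2:ℂ)^(2*k+1) * (Nat.factorial k : ℂ) * (ascPochhammer ℂ (k+1)).eval (α+1) := by
  have e3 : (2*k+1) % 2 = 1 := by omega
  have e4 : (2*k+1) / 2 = k := by omega
  simp only [gamDunkl, e3, e4]
  norm_num

lemma gam0 : gamDunkl α 0 = 1 := by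
  simpa using gam_even (α := α) 0

lemma gam_ne (hA : ∀ m : ℕ, α + 1 ≠ -(m:ℂ)) (n : ℕ) : gamDunkl α n ≠ 0 := by
  have h2 : ∀ m : ℕ, ((2:ℂ))^m ≠ 0 := fun m => pow_ne_zero _ two_ne_zero
  have hf : ∀ m : ℕ, ((Nat.factorial m : ℂ)) ≠ 0 :=
    fun m => Nat.cast_ne_zero.2 (Nat.factorial_ne_zero m)
  rcases Nat.even_or_odd n with ⟨k, hk⟩ | ⟨k, hk⟩
  · rw [show n = 2*k by omega, gam_even]
    exact mul_ne_zero (mul_ne_zero (h2 _) (hf _)) (poch_ne_zero hA k)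
  · rw [show n = 2*k+1 by omega, gam_odd]
    exact mul_ne_zero (mul_ne_zero (h2 _) (hf _)) (poch_ne_zero hA (k+1))

lemma gam_succ (n : ℕ) : gamDunkl α (n+1)
    = (((n+1 : ℕ):ℂ) + (α+1/2)*(1-(-1)^(n+1))) * gamDunkl α n := by
  rcases Nat.even_or_odd n with ⟨k, hk⟩ | ⟨k, hk⟩
  · rw [show n = 2*k by omega]
    rw [show 2*k+1 = 2*k+1 from rfl, gam_odd, gam_even]
    have hodd : Odd (2*k+1) := ⟨k, by omega⟩
    rw [hodd.neg_one_pow]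
    rw [poch_eval_succ]
    push_cast
    ring
  · rw [show n = 2*k+1 by omega]
    rw [show 2*k+1+1 = 2*(k+1) by omega, gam_even, gam_odd]
    have hev : Even (2*(k+1)) := ⟨k+1, by omega⟩
    rw [hev.neg_one_pow]
    rw [Nat.factorial_succ]
    push_cast
    ring

lemma hasSum_ker (hA : ∀ m : ℕ, α + 1 ≠ -(m:ℂ)) (z : ℂ) :
    HasSum (fun n : ℕ => z^n / gamDunkl α n) (dunklKer α z) := by
  have hb1 : (α+1) ≠ 0 := fun h => hA 0 (by simpa using h)
  have hFE : HasSum (fun n : ℕ => if n % 2 = 0 then z^n / gamDunkl α n else 0) (modI α z) := by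
    convert hasSum_modI' hA z using 2 with n
    by_cases h : n % 2 = 0
    · simp only [Ic, gamDunkl, h, if_pos rfl, if_true, eq_self_iff_true]
      rw [div_eq_mul_inv, mul_comm]
    · simp [h, Ic]
  have hFO : HasSum (fun n : ℕ => if n % 2 = 1 then z^n / gamDunkl α n else 0)
      (z / (2*(α+1)) * modI (α+1) z) := by
    have h0 := (hasSum_modI' (hα_succ hA) z).mul_left (z / (2*(α+1)))
    have h1 := hasSum_evens h0 (fun k => by
      have h2 : (2*k+1) % 2 = 1 := by omega
      simp [Ic, h2])
    apply hasSum_odd_ext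
    · intro k
      have h2 : (2*k) % 2 = 0 := by omega
      simp [h2]
    · convert h1 using 2 with k
      have h2 : (2*k+1) % 2 = 1 := by omega
      have e3 : (2*k) % 2 = 0 := by omega
      have e4 : (2*k) / 2 = k := by omega
      simp only [h2, if_pos rfl, if_true, Ic, e3, e4, gam_odd]
      rw [poch_eval_succ_left k (α+1)]
      have hP : (ascPochhammer ℂ k).eval (α+1+1) ≠ 0 := poch_ne_zero (hα_succ hA) k
      have hf : ((Nat.factorial k : ℂ)) ≠ 0 := Nat.cast_ne_zero.2 (Nat.factorial_ne_zero k)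
      have h2k : ((2:ℂ))^(2*k) ≠ 0 := pow_ne_zero _ two_ne_zero
      rw [pow_succ]
      field_simp
      ring
  have hsum := hFE.add hFO
  have hfun : (fun n : ℕ => z^n / gamDunkl α n)
      = fun n => (if n % 2 = 0 then z^n / gamDunkl α n else 0)
        + (if n % 2 = 1 then z^n / gamDunkl α n else 0) := by
    funext n
    rcases Nat.even_or_odd n with ⟨k, hk⟩ | ⟨k, hk⟩
    · have h2 : n % 2 = 0 := by omega
      simp [h2]
    · have h2 : n % 2 = 1 := by omega
      simp [h2]
  show HasSum _ (modI α z + z / (2*(α+1)) * modI (α+1) z)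
  rw [hfun]
  exact hsum

/-- power-series coefficients are unique -/
lemma coeff_unique {f : ℂ → ℂ} {a b : ℕ → ℂ} {r : ℝ} (hr : 0 < r)
    (ha : ∀ t : ℂ, ‖t‖ < r → HasSum (fun n => a n * t^n) (f t))
    (hb : ∀ t : ℂ, ‖t‖ < r → HasSum (fun n => b n * t^n) (f t)) : a = b := by
  have mk : ∀ (c : ℕ → ℂ), (∀ t : ℂ, ‖t‖ < r → HasSum (fun n => c n * t^n) (f t)) →
      HasFPowerSeriesAt f (FormalMultilinearSeries.ofScalars ℂ c) 0 := by
    intro c hc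
    refine ⟨Real.toNNReal (r/2), ?_, ?_, ?_⟩
    · apply FormalMultilinearSeries.le_radius_of_summable
      have hr2 : ‖((r/2 : ℝ) : ℂ)‖ < r := by
        rw [Complex.norm_real, Real.norm_of_nonneg (by linarith)]
        linarith
      have h := (hc ((r/2 : ℝ) : ℂ) hr2).summable.norm
      convert h using 2 with n
      rw [FormalMultilinearSeries.ofScalars_norm, norm_mul, norm_pow, Complex.norm_real,
        Real.norm_of_nonneg (by linarith : (0:ℝ) ≤ r/2), Real.coe_toNNReal _ (by linarith)]
    · exact_mod_cast Real.toNNReal_pos.mpr (by linarith)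
    · intro y hy
      rw [mem_emetric_ball_zero_iff] at hy
      have hy' : ‖y‖ < r/2 := by
        have := ENNReal.coe_lt_coe.mp (by exact_mod_cast hy)
        calc ‖y‖ = (‖y‖₊ : ℝ) := rfl
        _ < ((Real.toNNReal (r/2)) : ℝ) := by exact_mod_cast this
        _ ≤ r/2 := le_of_eq (Real.coe_toNNReal _ (by linarith))
      rw [zero_add]
      have h := hc y (by linarith)
      convert h using 2 with n
      · rfl
      · rw [FormalMultilinearSeries.ofScalars_apply_eq, smul_eq_mul]
  exact FormalMultilinearSeries.ofScalars_series_injective ℂ ℂ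
    ((mk a ha).eq_formalMultilinearSeries (mk b hb))

/-- Cauchy product of two absolutely convergent complex series -/
lemma hasSum_mul {f g : ℕ → ℂ} {A B : ℂ} (hf : HasSum f A) (hg : HasSum g B) :
    HasSum (fun n => ∑ k ∈ Finset.range (n+1), f k * g (n-k)) (A * B) := by
  have hf' := hf.summable.norm
  have hg' := hg.summable.norm
  have hs := (summable_norm_sum_mul_range_of_summable_norm hf' hg').of_norm
  have h := hs.hasSum
  rwa [← tsum_mul_tsum_eq_tsum_sum_range_of_summable_norm hf' hg', hf.tsum_eq, hg.tsum_eq] at h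

theorem key (hA : ∀ m : ℕ, α + 1 ≠ -(m:ℂ)) (u : ℂ) (hu0 : u ≠ 0) (hu : modI (α+1) u ≠ 0)
    (E : ℕ → Polynomial ℂ)
    (hE : ∀ x : ℂ, ∃ r > 0, ∀ t : ℂ, ‖t‖ < r →
      HasSum (fun n : ℕ => (E n).eval x * t^n / gamDunkl α n)
        (u * modI (α+1) u * dunklKer α (x*t) / ((t+u) * modI (α+1) (t+u))))
    (x : ℂ) (n : ℕ) :
    ∑ j ∈ Finset.range (n+1), (E j).eval x / gamDunkl α j * cD α u (n-j)
      = u * modI (α+1) u * x^n / gamDunkl α n := by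
  obtain ⟨r, hr, hS⟩ := hE x
  -- the denominator is nonvanishing near 0
  obtain ⟨ε, hε, hball⟩ : ∃ ε > 0, ∀ t : ℂ, ‖t‖ < ε → (t+u) * modI (α+1) (t+u) ≠ 0 := by
    have hcont : ContinuousAt (fun t : ℂ => (t+u) * modI (α+1) (t+u)) 0 := by
      apply ContinuousAt.mul
      · exact (continuous_id.add continuous_const).continuousAt
      · exact ((differentiable_modI (hα_succ hA)).continuous.comp
          (continuous_id.add continuous_const)).continuousAt
    have hD0 : (fun t : ℂ => (t+u) * modI (α+1) (t+u)) 0 ≠ 0 := by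
      simpa using mul_ne_zero hu0 hu
    have hev := hcont.eventually_ne hD0
    rw [Metric.eventually_nhds_iff] at hev
    obtain ⟨ε, hε, h⟩ := hev
    exact ⟨ε, hε, fun t ht => h (by simpa [dist_eq_norm] using ht)⟩
  set r0 : ℝ := min r ε with hr0
  have hr0p : 0 < r0 := lt_min hr hε
  set a : ℕ → ℂ := fun n => ∑ j ∈ Finset.range (n+1), (E j).eval x / gamDunkl α j * cD α u (n-j)
    with hadef
  set b : ℕ → ℂ := fun n => u * modI (α+1) u * x^n / gamDunkl α n with hbdef
  have hab : a = b := by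
    apply coeff_unique (f := fun t => u * modI (α+1) u * dunklKer α (x*t)) hr0p
    · intro t ht
      have ht1 : ‖t‖ < r := lt_of_lt_of_le ht (min_le_left _ _)
      have ht2 : ‖t‖ < ε := lt_of_lt_of_le ht (min_le_right _ _)
      have hA1 : HasSum (fun j : ℕ => (E j).eval x / gamDunkl α j * t^j)
          (u * modI (α+1) u * dunklKer α (x*t) / ((t+u) * modI (α+1) (t+u))) := by
        convert hS t ht1 using 2 with j
        ring
      have hprod := hasSum_mul hA1 (hasSum_cD hA u t)
      have hval : u * modI (α+1) u * dunklKer α (x*t) / ((t+u) * modI (α+1) (t+u))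
          * ((t+u) * modI (α+1) (t+u)) = u * modI (α+1) u * dunklKer α (x*t) :=
        div_mul_cancel₀ _ (hball t ht2)
      rw [hval] at hprod
      convert hprod using 2 with n
      rw [hadef, Finset.sum_mul]
      apply Finset.sum_congr rfl
      intro j hj
      have hjn : j ≤ n := by
        have := Finset.mem_range.mp hj; omega
      have hpow : t^(j:ℕ) * t^(n-j) = t^n := by
        rw [← pow_add]
        congr 1
        omega
      rw [← hpow]
      ring
    · intro t ht
      have h := (hasSum_ker hA (x*t)).mul_left (u * modI (α+1) u)
      convert h using 2 with n
      · rfl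
      · rw [hbdef, mul_pow]
        ring
  exact congrFun hab n

lemma divX_C_mul' (a : ℂ) (p : Polynomial ℂ) : (Polynomial.C a * p).divX = C a * p.divX := by
  ext k
  simp [Polynomial.coeff_divX, Polynomial.coeff_C_mul]

lemma dP_add (p q : Polynomial ℂ) :
    dunklPoly α (p + q) = dunklPoly α p + dunklPoly α q := by
  unfold dunklPoly
  rw [derivative_add, Polynomial.add_comp]
  have h : p + q - (p.comp (-X) + q.comp (-X)) = (p - p.comp (-X)) + (q - q.comp (-X)) := by
    ring
  rw [h, Polynomial.divX_add]
  ring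

lemma dP_Cmul (a : ℂ) (p : Polynomial ℂ) :
    dunklPoly α (C a * p) = C a * dunklPoly α p := by
  unfold dunklPoly
  rw [derivative_C_mul, Polynomial.mul_comp, Polynomial.C_comp]
  have h : C a * p - C a * p.comp (-X) = C a * (p - p.comp (-X)) := by ring
  rw [h, divX_C_mul']
  ring

lemma dP_zero : dunklPoly α 0 = 0 := by
  unfold dunklPoly
  simp

lemma dP_C (a : ℂ) : dunklPoly α (C a) = 0 := by
  unfold dunklPoly
  simp

lemma dP_one : dunklPoly α 1 = 0 := by
  simpa using dP_C (α := α) 1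

lemma dP_sum {s : Finset ℕ} (f : ℕ → Polynomial ℂ) :
    dunklPoly α (∑ j ∈ s, f j) = ∑ j ∈ s, dunklPoly α (f j) := by
  induction s using Finset.cons_induction with
  | empty => simpa using dP_zero
  | cons j s hj ih =>
      rw [Finset.sum_cons, Finset.sum_cons, dP_add, ih]

lemma dP_Xpow (n : ℕ) :
    dunklPoly α (X^n) = C ((n:ℂ) + (α + 1/2) * (1 - (-1)^n)) * X^(n-1) := by
  cases n with
  | zero =>
      simp only [pow_zero, Nat.cast_zero]
      rw [dP_one]
      norm_num
  | succ m =>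
      unfold dunklPoly
      rw [Polynomial.derivative_X_pow, Polynomial.pow_comp, Polynomial.X_comp]
      have h1 : (-X : Polynomial ℂ)^(m+1) = C ((-1)^(m+1)) * X^(m+1) := by
        rw [neg_pow]
        simp [map_pow]
      rw [h1]
      have h2 : (X^(m+1) - C ((-1:ℂ)^(m+1)) * X^(m+1)) = C (1 - (-1:ℂ)^(m+1)) * X^(m+1) := by
        rw [map_sub, map_one]
        ring
      rw [h2, divX_C_mul']
      have h3 : (X^(m+1) : Polynomial ℂ).divX = X^m := by
        ext k
        simp [Polynomial.coeff_divX, Polynomial.coeff_X_pow]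
      rw [h3]
      have h4 : (m+1) - 1 = m := rfl
      rw [h4, ← mul_assoc, ← C_mul, ← add_mul, ← C_add]
      congr 2
      push_cast
      ring

lemma cD_zero (hA : ∀ m : ℕ, α + 1 ≠ -(m:ℂ)) (u : ℂ) : cD α u 0 = u * modI (α+1) u := by
  have hb1 : (α+1) ≠ 0 := fun h => hA 0 (by simpa using h)
  unfold cD
  rw [show (0:ℕ)+1 = 1 from rfl, iteratedDeriv_one, deriv_modI hA]
  simp only [Nat.factorial_zero, Nat.cast_one, div_one]
  field_simp

theorem main (hα : ∀ n : ℕ, α ≠ -((n:ℂ) + 1))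
    (u : ℂ) (hu0 : u ≠ 0) (hu : modI (α+1) u ≠ 0)
    (E : ℕ → Polynomial ℂ)
    (hE : ∀ x : ℂ, ∃ r > 0, ∀ t : ℂ, ‖t‖ < r →
      HasSum (fun n : ℕ => (E n).eval x * t^n / gamDunkl α n)
        (u * modI (α+1) u * dunklKer α (x*t) / ((t+u) * modI (α+1) (t+u)))) :
    (∀ n : ℕ, ∀ x : ℂ,
      x^n = 2*(1+α) * gamDunkl α n / (u * modI (α+1) u) *
        ∑ j ∈ Finset.range (n+1),
          (E j).eval x / (gamDunkl α j * (Nat.factorial (n-j) : ℂ))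
            * iteratedDeriv (n-j+1) (modI α) u)
    ∧ (∀ n : ℕ, 1 ≤ n →
      dunklPoly α (E n) = Polynomial.C ((n:ℂ) + (α + 1/2) * (1 - (-1)^n)) * E (n-1)) := by
  have hA : ∀ m : ℕ, α + 1 ≠ -(m:ℂ) := by
    intro m h; exact hα m (by linear_combination h)
  have hb1 : (α+1) ≠ 0 := fun h => hA 0 (by simpa using h)
  have hUI : u * modI (α+1) u ≠ 0 := mul_ne_zero hu0 hu
  have hkey := key hA u hu0 hu E hE
  constructor
  · -- part 1
    intro n x
    have h := hkey x n
    have hγ := gam_ne hA n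
    have hsum : ∑ j ∈ Finset.range (n+1),
        (E j).eval x / (gamDunkl α j * (Nat.factorial (n-j) : ℂ))
          * iteratedDeriv (n-j+1) (modI α) u
        = (2*(α+1))⁻¹ * ∑ j ∈ Finset.range (n+1),
            (E j).eval x / gamDunkl α j * cD α u (n-j) := by
      rw [Finset.mul_sum]
      apply Finset.sum_congr rfl
      intro j _
      unfold cD
      have hf : ((Nat.factorial (n-j) : ℂ)) ≠ 0 := Nat.cast_ne_zero.2 (Nat.factorial_ne_zero _)
      have hγj := gam_ne hA j
      field_simp
    rw [hsum, h]
    field_simp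
    ring
  · -- part 2
    set κ : ℕ → ℂ := fun n => (n:ℂ) + (α + 1/2) * (1 - (-1)^n) with hκ
    have hγκ : ∀ n : ℕ, gamDunkl α (n+1) = κ (n+1) * gamDunkl α n := by
      intro n
      rw [gam_succ n, hκ]
    have hc0 : cD α u 0 = u * modI (α+1) u := cD_zero hA u
    have hc0ne : cD α u 0 ≠ 0 := hc0 ▸ hUI
    -- polynomial form of key
    have Rel : ∀ n : ℕ, ∑ j ∈ Finset.range (n+1), C (cD α u (n-j) / gamDunkl α j) * E j
        = C (u * modI (α+1) u / gamDunkl α n) * X^n := by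
      intro n
      apply Polynomial.funext
      intro x
      rw [Polynomial.eval_finset_sum]
      simp only [Polynomial.eval_mul, Polynomial.eval_C, Polynomial.eval_pow, Polynomial.eval_X]
      have h := hkey x n
      calc ∑ j ∈ Finset.range (n+1), cD α u (n-j) / gamDunkl α j * (E j).eval x
          = ∑ j ∈ Finset.range (n+1), (E j).eval x / gamDunkl α j * cD α u (n-j) := by
            apply Finset.sum_congr rfl
            intro j _
            ring
        _ = u * modI (α+1) u * x^n / gamDunkl α n := h
        _ = u * modI (α+1) u / gamDunkl α n * x^n := by ring
    -- E 0 is the constant 1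
    have hE0 : E 0 = 1 := by
      have h := Rel 0
      rw [show (0:ℕ)+1 = 1 from rfl] at h
      rw [Finset.sum_range_one] at h
      rw [gam0] at h
      simp only [Nat.sub_zero, pow_zero, mul_one, div_one] at h
      rw [hc0] at h
      exact mul_left_cancel₀ (show (C (u * modI (α+1) u) : Polynomial ℂ) ≠ 0 by
        rw [Ne, Polynomial.C_eq_zero]; exact hUI)
        (show C (u * modI (α+1) u) * E 0 = C (u * modI (α+1) u) * 1 by rw [mul_one]; exact h)
    have hdE0 : dunklPoly α (E 0) = 0 := by rw [hE0]; exact dP_one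
    -- main induction
    have Q : ∀ m : ℕ, dunklPoly α (E (m+1)) = C (κ (m+1)) * E m := by
      intro m
      induction m using Nat.strong_induction_on with
      | _ m IH =>
      have h1 := congrArg (dunklPoly α) (Rel (m+1))
      rw [dP_sum] at h1
      simp only [dP_Cmul] at h1
      rw [dP_Xpow (m+1)] at h1
      rw [Finset.sum_range_succ'] at h1
      rw [hdE0, mul_zero, add_zero] at h1
      rw [Finset.sum_range_succ] at h1
      simp only [Nat.sub_self] at h1
      have hstep : ∀ i ∈ Finset.range m,
          C (cD α u (m+1-(i+1)) / gamDunkl α (i+1)) * dunklPoly α (E (i+1))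
          = C (cD α u (m-i) / gamDunkl α i) * E i := by
        intro i hi
        rw [IH i (Finset.mem_range.mp hi)]
        rw [← mul_assoc, ← C_mul]
        congr 2
        have hgi := gam_ne hA i
        have hgi1 := gam_ne hA (i+1)
        have hκne : κ (i+1) ≠ 0 := fun h0 => hgi1 (by rw [hγκ i, h0, zero_mul])
        rw [show m+1-(i+1) = m-i by omega, hγκ i]
        field_simp [hκne]
        try ring
      rw [Finset.sum_congr rfl hstep] at h1
      have hRelm := Rel m
      rw [Finset.sum_range_succ] at hRelm
      have hsub : ∑ i ∈ Finset.range m, C (cD α u (m-i) / gamDunkl α i) * E i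
          = C (u * modI (α+1) u / gamDunkl α m) * X^m
            - C (cD α u 0 / gamDunkl α m) * E m := by
        rw [← hRelm]
        simp
      rw [hsub] at h1
      -- simplify RHS of h1
      have hRHS : C (u * modI (α+1) u / gamDunkl α (m+1))
          * (C ((((m+1):ℕ):ℂ) + (α + 1/2) * (1 - (-1)^(m+1))) * X^((m+1)-1))
          = C (u * modI (α+1) u / gamDunkl α m) * X^m := by
        rw [show (m+1)-1 = m from rfl, ← mul_assoc, ← C_mul]
        congr 2
        have hgm := gam_ne hA m
        have hgm1 := gam_ne hA (m+1)
        have hκne : κ (m+1) ≠ 0 := by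
          intro h0
          apply hgm1
          rw [hγκ m, h0, zero_mul]
        have hbody : (((m+1):ℕ):ℂ) + (α + 1/2) * (1 - (-1)^(m+1)) = κ (m+1) := by
          rw [hκ]
        rw [hγκ m, hbody]
        field_simp [hκne]
        try ring
      rw [hRHS] at h1
      -- conclude
      have h2 : C (cD α u 0 / gamDunkl α (m+1)) * dunklPoly α (E (m+1))
          = C (cD α u 0 / gamDunkl α m) * E m := by
        have := h1
        -- h1 : (RHS' - C(c0/γm) E m) + C(c0/γ(m+1)) * dP(E(m+1)) = RHS'
        linear_combination h1
      have hCne : (C (cD α u 0 / gamDunkl α (m+1)) : Polynomial ℂ) ≠ 0 := by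
        rw [Ne, Polynomial.C_eq_zero]
        exact div_ne_zero hc0ne (gam_ne hA (m+1))
      apply mul_left_cancel₀ hCne
      rw [h2, ← mul_assoc, ← C_mul]
      congr 2
      have hgm := gam_ne hA m
      have hgm1 := gam_ne hA (m+1)
      have hκne : κ (m+1) ≠ 0 := by
        intro h0
        apply hgm1
        rw [hγκ m, h0, zero_mul]
      rw [hγκ m]
      field_simp [hκne]
      try ring
    intro n hn
    obtain ⟨m, rfl⟩ : ∃ m, n = m+1 := ⟨n-1, by omega⟩
    rw [show m+1-1 = m from rfl]
    have := Q m
    rw [hκ] at this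
    exact this

end AED

/-- **Properties of the Apostol–Euler–Dunkl polynomials**, defined by the generating identity
`u𝕀_{α+1}(u)E_α(xt)/((t+u)𝕀_{α+1}(t+u)) = ∑ 𝔈_{n,α,u}(x) tⁿ/γ_{n,α}`: the recurrence
`xⁿ = (2(1+α)γ_{n,α}/(u𝕀_{α+1}(u))) ∑_{j=0}^n (𝔈_{j,α,u}(x)/(γ_{j,α}(n-j)!)) 𝕀_α^{(n-j+1)}(u)`
and `Λ_α 𝔈_n = (n + (α+1/2)(1-(-1)ⁿ)) 𝔈_{n-1}` for `n ≥ 1`. -/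
theorem apostol_euler_dunkl_properties (α : ℂ) (hα : ∀ n : ℕ, α ≠ -((n:ℂ) + 1))
    (u : ℂ) (hu0 : u ≠ 0) (hu : modI (α+1) u ≠ 0)
    (E : ℕ → Polynomial ℂ)
    (hE : ∀ x : ℂ, ∃ r > 0, ∀ t : ℂ, ‖t‖ < r →
      HasSum (fun n : ℕ => (E n).eval x * t^n / gamDunkl α n)
        (u * modI (α+1) u * dunklKer α (x*t) / ((t+u) * modI (α+1) (t+u)))) :
    (∀ n : ℕ, ∀ x : ℂ,
      x^n = 2*(1+α) * gamDunkl α n / (u * modI (α+1) u) *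
        ∑ j ∈ Finset.range (n+1),
          (E j).eval x / (gamDunkl α j * (Nat.factorial (n-j) : ℂ))
            * iteratedDeriv (n-j+1) (modI α) u)
    ∧ (∀ n : ℕ, 1 ≤ n →
      dunklPoly α (E n) = Polynomial.C ((n:ℂ) + (α + 1/2) * (1 - (-1)^n)) * E (n-1)) :=
  AED.main hα u hu0 hu E hE
end

section
/- Let α ∈ ℂ ∖ {−1,−2,…} and let P_k, Q_k be the rational functions defined by P_0(z) = 1, Q_0(z) = 0, P_{k+1}(z) = P_k′(z) + (2(α+1)/z)·Q_k(z), Q_{k+1}(z) = Q_k′(z) + (z/(2(α+1)))·P_k(z) − (2(α+1)/z)·Q_k(z). (i) If s ≠ 0 satisfies 𝕀_{α+1}(is) = 0, then 𝕀_α^{(k)}(is) = 𝕀_α(is) P_k(is) for every k ≥ 0. (ii) If j ≠ 0 satisfies 𝕀_α(ij) = 0, then 𝕀_α^{(k)}(ij) = 𝕀_{α+1}(ij) Q_k(ij) for every k ≥ 0. Moreover P_1(z) = 0, P_2(z) = 1, P_3(z) = −(2α+1)/z, P_4(z) = (2α+1)(2α+3)/z² + 1, Q_1(z) = z/(2(α+1)),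 Q_2(z) = −(2α+1)/(2(α+1)), Q_3(z) = z/(2(α+1)) + (2α+1)/z, and Q_4(z) = −(1+2α)(1/(1+α) + (3+2α)/z²). -/
open Complex Polynomial Finset Filter Topology

/-- The pair of rational functions `(P_k, Q_k)`:
`P_0 = 1`, `Q_0 = 0`, `P_{k+1} = P_k' + (2(α+1)/z) Q_k`,
`Q_{k+1} = Q_k' + (z/(2(α+1))) P_k - (2(α+1)/z) Q_k`. -/
noncomputable def dunklPQ (α : ℂ) : ℕ → (ℂ → ℂ) × (ℂ → ℂ)
  | 0 => (fun _ => 1, fun _ => 0)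
  | k+1 =>
      (fun z => deriv (dunklPQ α k).1 z + 2*(α+1)/z * (dunklPQ α k).2 z,
       fun z => deriv (dunklPQ α k).2 z + z/(2*(α+1)) * (dunklPQ α k).1 z
                  - 2*(α+1)/z * (dunklPQ α k).2 z)

namespace DunklAux

noncomputable def D (α : ℂ) (n : ℕ) : ℂ :=
  (Nat.factorial n : ℂ) * Complex.Gamma ((n:ℂ) + α + 1)

lemma npa_ne {α : ℂ} (hα : ∀ n : ℕ, α ≠ -((n:ℂ) + 1)) (n : ℕ) : (n:ℂ) + α + 1 ≠ 0 := by
  intro h; exact hα n (by linear_combination h)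

lemma Gam_ne {α : ℂ} (hα : ∀ n : ℕ, α ≠ -((n:ℂ) + 1)) (n : ℕ) :
    Complex.Gamma ((n:ℂ) + α + 1) ≠ 0 := by
  apply Complex.Gamma_ne_zero
  intro m h
  exact hα (n + m) (by push_cast; linear_combination h)

lemma D_ne {α : ℂ} (hα : ∀ n : ℕ, α ≠ -((n:ℂ) + 1)) (n : ℕ) : D α n ≠ 0 :=
  mul_ne_zero (by exact_mod_cast Nat.factorial_ne_zero n) (Gam_ne hα n)

lemma D_succ {α : ℂ} (hα : ∀ n : ℕ, α ≠ -((n:ℂ) + 1)) (n : ℕ) :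
    D α (n+1) = ((n:ℂ)+1) * (((n:ℂ) + α + 1)) * D α n := by
  have h1 : ((n+1 : ℕ) : ℂ) + α + 1 = ((n:ℂ) + α + 1) + 1 := by push_cast; ring
  rw [D, h1, Complex.Gamma_add_one _ (npa_ne hα n), Nat.factorial_succ, D]
  push_cast; ring

lemma norm_npa_ge (α : ℂ) (n : ℕ) : (n:ℝ) - ‖α + 1‖ ≤ ‖(n:ℂ) + α + 1‖ := by
  have h : (n:ℝ) ≤ ‖(n:ℂ) + α + 1‖ + ‖α + 1‖ := by
    calc (n:ℝ) = ‖((n:ℂ) + α + 1) - (α+1)‖ := by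
          rw [show ((n:ℂ) + α + 1) - (α+1) = (n:ℂ) by ring]
          simp
      _ ≤ ‖(n:ℂ) + α + 1‖ + ‖α + 1‖ := norm_sub_le _ _
  linarith

lemma summable_bound {α : ℂ} (hα : ∀ n : ℕ, α ≠ -((n:ℂ) + 1)) {R : ℝ} (hR : 1 ≤ R) :
    Summable (fun n : ℕ => 2*((n:ℝ)+1) * R^(2*n) / ‖D α n‖) := by
  apply summable_of_ratio_norm_eventually_le (r := 1/2) (by norm_num)
  have h1 : ∀ᶠ n : ℕ in atTop, (‖α+1‖ + 1 : ℝ) ≤ n :=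
    tendsto_natCast_atTop_atTop.eventually_ge_atTop _
  have h2 : ∀ᶠ n : ℕ in atTop, (4*R^2 : ℝ) ≤ (n:ℝ) + 1 := by
    have := tendsto_natCast_atTop_atTop (R := ℝ) |>.eventually_ge_atTop (4*R^2)
    filter_upwards [this] with n hn; linarith
  filter_upwards [h1, h2] with n hn1 hn2
  have hDpos : 0 < ‖D α n‖ := norm_pos_iff.2 (D_ne hα n)
  have hD1pos : 0 < ‖D α (n+1)‖ := norm_pos_iff.2 (D_ne hα (n+1))
  have hNge : (1:ℝ) ≤ ‖(n:ℂ) + α + 1‖ := by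
    have := norm_npa_ge α n; linarith
  have hRpos : (0:ℝ) < R := by linarith
  have hrpos : (0:ℝ) < R^(2*n) := pow_pos hRpos _
  have hDsucc : ‖D α (n+1)‖ = ((n:ℝ)+1) * ‖(n:ℂ) + α + 1‖ * ‖D α n‖ := by
    rw [D_succ hα n, norm_mul, norm_mul]
    congr 2
    rw [show ((n:ℂ)+1) = ((n+1:ℕ):ℂ) by push_cast; ring, Complex.norm_natCast]
    push_cast; ring
  rw [Real.norm_of_nonneg (by positivity), Real.norm_of_nonneg (by positivity), hDsucc]
  rw [div_le_iff₀ (by positivity), show 2*(n+1) = 2*n+2 by ring, pow_add]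
  push_cast
  have key : 2*((n:ℝ)+1+1) * R^2 ≤ ((n:ℝ)+1)*((n:ℝ)+1) * ‖(n:ℂ) + α + 1‖ := by
    have h3 : 2*((n:ℝ)+1+1) * R^2 ≤ ((n:ℝ)+1)*((n:ℝ)+1) := by nlinarith
    nlinarith
  calc 2*((n:ℝ)+1+1) * (R^(2*n) * R^2) = (2*((n:ℝ)+1+1) * R^2) * R^(2*n) := by ring
    _ ≤ (((n:ℝ)+1)*((n:ℝ)+1) * ‖(n:ℂ) + α + 1‖) * R^(2*n) := by
        exact mul_le_mul_of_nonneg_right key (le_of_lt hrpos)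
    _ = 1/2 * (2*((n:ℝ)+1) * R^(2*n) / ‖D α n‖) * (((n:ℝ)+1) * ‖(n:ℂ) + α + 1‖ * ‖D α n‖) := by
        have hD : ‖D α n‖ ≠ 0 := hDpos.ne'
        field_simp [hD]

noncomputable def g (α : ℂ) (n : ℕ) (z : ℂ) : ℂ := (z/2)^(2*n) / D α n

noncomputable def g' (α : ℂ) (n : ℕ) (z : ℂ) : ℂ :=
  ((2*n : ℕ) : ℂ) * (z/2)^(2*n-1) * ((1:ℂ)/2) / D α n

lemma modI_eq (α z : ℂ) : modI α z = Complex.Gamma (α+1) * ∑' n, g α n z := rfl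

lemma hasDerivAt_g (α : ℂ) (n : ℕ) (z : ℂ) : HasDerivAt (g α n) (g' α n z) z := by
  have h0 : HasDerivAt (fun z : ℂ => z / 2) (1/2) z := by
    simpa using (hasDerivAt_id z).div_const 2
  exact (h0.pow (2*n)).div_const (D α n)

lemma norm_g'_le {α : ℂ} (hα : ∀ n : ℕ, α ≠ -((n:ℂ) + 1)) (n : ℕ) {R : ℝ} (hR : 1 ≤ R)
    {y : ℂ} (hy : ‖y‖ ≤ R) :
    ‖g' α n y‖ ≤ 2*((n:ℝ)+1) * R^(2*n) / ‖D α n‖ := by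
  have hy2 : ‖y/2‖ ≤ R := by
    rw [norm_div]
    simp only [Complex.norm_ofNat]
    linarith [norm_nonneg y]
  have h1 : ‖g' α n y‖ = (2*(n:ℝ)) * ‖y/2‖^(2*n-1) * (1/2) / ‖D α n‖ := by
    rw [g', norm_div, norm_mul, norm_mul, norm_pow]
    push_cast
    norm_num
  rw [h1]
  have hD : (0:ℝ) < ‖D α n‖ := norm_pos_iff.2 (D_ne hα n)
  apply div_le_div_of_nonneg_right ?_ hD.le
  have p1 : ‖y/2‖^(2*n-1) ≤ R^(2*n-1) := pow_le_pow_left₀ (norm_nonneg _) hy2 _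
  have p2 : R^(2*n-1) ≤ R^(2*n) := pow_le_pow_right₀ hR (Nat.sub_le _ _)
  have p3 : (0:ℝ) ≤ R^(2*n) := pow_nonneg (by linarith) _
  nlinarith [Nat.cast_nonneg (α := ℝ) n]

lemma norm_g_le {α : ℂ} (hα : ∀ n : ℕ, α ≠ -((n:ℂ) + 1)) (n : ℕ) {R : ℝ} (hR : 1 ≤ R)
    {y : ℂ} (hy : ‖y‖ ≤ R) :
    ‖g α n y‖ ≤ 2*((n:ℝ)+1) * R^(2*n) / ‖D α n‖ := by
  have hy2 : ‖y/2‖ ≤ R := by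
    rw [norm_div]
    simp only [Complex.norm_ofNat]
    linarith [norm_nonneg y]
  have h1 : ‖g α n y‖ = ‖y/2‖^(2*n) / ‖D α n‖ := by
    rw [g, norm_div, norm_pow]
  rw [h1]
  have hD : (0:ℝ) < ‖D α n‖ := norm_pos_iff.2 (D_ne hα n)
  apply div_le_div_of_nonneg_right ?_ hD.le
  have p1 : ‖y/2‖^(2*n) ≤ R^(2*n) := pow_le_pow_left₀ (norm_nonneg _) hy2 _
  nlinarith [Nat.cast_nonneg (α := ℝ) n, pow_nonneg (show (0:ℝ) ≤ R by linarith) (2*n)]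

lemma summable_g {α : ℂ} (hα : ∀ n : ℕ, α ≠ -((n:ℂ) + 1)) (z : ℂ) :
    Summable (fun n => g α n z) := by
  set R : ℝ := max 1 (‖z‖) with hRdef
  have hR : 1 ≤ R := le_max_left _ _
  have hz : ‖z‖ ≤ R := le_max_right _ _
  exact (summable_bound hα hR).of_norm_bounded (fun n => norm_g_le hα n hR hz)

lemma summable_g' {α : ℂ} (hα : ∀ n : ℕ, α ≠ -((n:ℂ) + 1)) (z : ℂ) :
    Summable (fun n => g' α n z) := by
  set R : ℝ := max 1 (‖z‖) with hRdef
  have hR : 1 ≤ R := le_max_left _ _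
  have hz : ‖z‖ ≤ R := le_max_right _ _
  exact (summable_bound hα hR).of_norm_bounded (fun n => norm_g'_le hα n hR hz)

lemma D_shift {α : ℂ} (hα : ∀ n : ℕ, α ≠ -((n:ℂ) + 1)) (n : ℕ) :
    D (α+1) n = ((n:ℂ) + α + 1) * D α n := by
  have h1 : ((n:ℂ)) + (α+1) + 1 = ((n:ℂ) + α + 1) + 1 := by ring
  rw [D, h1, Complex.Gamma_add_one _ (npa_ne hα n), D]
  ring

lemma g'_zero (α z : ℂ) : g' α 0 z = 0 := by simp [g']

lemma g'_succ {α : ℂ} (hα : ∀ n : ℕ, α ≠ -((n:ℂ) + 1)) (n : ℕ) (z : ℂ) :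
    g' α (n+1) z = (z/2) * g (α+1) n z := by
  have hD : D α n ≠ 0 := D_ne hα n
  have hsub : 2*(n+1) - 1 = 2*n+1 := by omega
  rw [g', g, D_succ hα n, D_shift hα n, hsub, pow_succ]
  have h1 : ((n:ℂ)+1) ≠ 0 := Nat.cast_add_one_ne_zero n
  have h2 : ((n:ℂ) + α + 1) ≠ 0 := npa_ne hα n
  field_simp
  push_cast
  ring

lemma hasDerivAt_modI {α : ℂ} (hα : ∀ n : ℕ, α ≠ -((n:ℂ) + 1)) (z : ℂ) :
    HasDerivAt (modI α) (z/(2*(α+1)) * modI (α+1) z) z := by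
  set R : ℝ := max 1 (‖z‖ + 1) with hRdef
  have hR : 1 ≤ R := le_max_left _ _
  have hzball : z ∈ Metric.ball (0:ℂ) R := by
    simp only [Metric.mem_ball, dist_zero_right]
    calc ‖z‖ < ‖z‖ + 1 := by linarith
      _ ≤ R := le_max_right _ _
  have key : HasDerivAt (fun y => ∑' n, g α n y) (∑' n, g' α n z) z := by
    apply hasDerivAt_tsum_of_isPreconnected (summable_bound hα hR) Metric.isOpen_ball
      (convex_ball (0:ℂ) R).isPreconnected
      (fun n y _ => hasDerivAt_g α n y)
      (fun n y hy => norm_g'_le hα n hR (le_of_lt (by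
        simpa only [Metric.mem_ball, dist_zero_right] using hy)))
      hzball (summable_g hα z) hzball
  have key2 : HasDerivAt (modI α) (Complex.Gamma (α+1) * ∑' n, g' α n z) z := by
    have := key.const_mul (Complex.Gamma (α+1))
    exact this
  convert key2 using 1
  -- value identity
  have hsum' := summable_g' hα z
  rw [Summable.tsum_eq_zero_add hsum', g'_zero, zero_add]
  have hcongr : ∀ n : ℕ, g' α (n+1) z = (z/2) * g (α+1) n z := fun n => g'_succ hα n z
  rw [tsum_congr hcongr, tsum_mul_left]
  have hmodI1 : modI (α+1) z = Complex.Gamma (α+1+1) * ∑' n, g (α+1) n z := rfl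
  rw [hmodI1, Complex.Gamma_add_one (α+1) (by simpa using npa_ne hα 0)]
  have h1 : α + 1 ≠ 0 := by simpa using npa_ne hα 0
  field_simp

lemma hα_succ {α : ℂ} (hα : ∀ n : ℕ, α ≠ -((n:ℂ) + 1)) :
    ∀ n : ℕ, α + 1 ≠ -((n:ℂ) + 1) := by
  intro n h
  exact hα (n+1) (by push_cast; linear_combination h)

lemma diff_term {α : ℂ} (hα : ∀ n : ℕ, α ≠ -((n:ℂ) + 1)) (n : ℕ) (z : ℂ) :
    Complex.Gamma (α+1) * g α n z - Complex.Gamma (α+1+1) * g (α+1) n z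
      = (n:ℂ) * Complex.Gamma (α+1) * g (α+1) n z := by
  have h1 : α + 1 ≠ 0 := by simpa using npa_ne hα 0
  rw [g, g, D_shift hα n, Complex.Gamma_add_one (α+1) h1]
  have hD : D α n ≠ 0 := D_ne hα n
  have h2 : ((n:ℂ) + α + 1) ≠ 0 := npa_ne hα n
  field_simp
  ring

lemma term2 {α : ℂ} (hα : ∀ n : ℕ, α ≠ -((n:ℂ) + 1)) (n : ℕ) (z : ℂ) :
    ((n:ℂ)+1) * g (α+1) (n+1) z = (z/2)^2 * g (α+1+1) n z := by
  have hα' := hα_succ hα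
  rw [g, g, D_succ hα' n, D_shift hα' n]
  have h1 : ((n:ℂ)+1) ≠ 0 := Nat.cast_add_one_ne_zero n
  have h2 : ((n:ℂ) + (α+1) + 1) ≠ 0 := npa_ne hα' n
  have hD : D (α+1) n ≠ 0 := D_ne hα' n
  rw [show 2*(n+1) = 2*n+2 by ring, pow_add]
  field_simp

lemma modI_sub {α : ℂ} (hα : ∀ n : ℕ, α ≠ -((n:ℂ) + 1)) (z : ℂ) :
    modI α z - modI (α+1) z = z^2/(4*(α+1)*(α+2)) * modI (α+2) z := by
  have hα' := hα_succ hα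
  have hα'' := hα_succ hα'
  have h1 : α + 1 ≠ 0 := by simpa using npa_ne hα 0
  have h2 : α + 2 ≠ 0 := by
    have := npa_ne hα 1; intro h; apply this; push_cast; linear_combination h
  -- turn both modI's into tsums of products
  rw [modI_eq, modI_eq, ← tsum_mul_left, ← tsum_mul_left]
  have hs1 : Summable (fun n => Complex.Gamma (α+1) * g α n z) :=
    (summable_g hα z).mul_left _
  have hs2 : Summable (fun n => Complex.Gamma (α+1+1) * g (α+1) n z) :=
    (summable_g hα' z).mul_left _
  rw [← Summable.tsum_sub hs1 hs2]
  have hd : Summable (fun n : ℕ => (n:ℂ) * Complex.Gamma (α+1) * g (α+1) n z) :=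
    (hs1.sub hs2).congr (fun n => diff_term hα n z)
  calc ∑' n, (Complex.Gamma (α+1) * g α n z - Complex.Gamma (α+1+1) * g (α+1) n z)
      = ∑' n : ℕ, (n:ℂ) * Complex.Gamma (α+1) * g (α+1) n z :=
        tsum_congr (fun n => diff_term hα n z)
    _ = ((0:ℕ):ℂ) * Complex.Gamma (α+1) * g (α+1) 0 z
        + ∑' n : ℕ, ((n+1:ℕ):ℂ) * Complex.Gamma (α+1) * g (α+1) (n+1) z :=
        Summable.tsum_eq_zero_add hd
    _ = ∑' n : ℕ, (Complex.Gamma (α+1) * (z/2)^2) * g (α+1+1) n z := by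
        rw [Nat.cast_zero, zero_mul, zero_mul, zero_add]
        apply tsum_congr
        intro n
        push_cast
        rw [show ((n:ℂ)+1) * Complex.Gamma (α+1) * g (α+1) (n+1) z
            = Complex.Gamma (α+1) * (((n:ℂ)+1) * g (α+1) (n+1) z) by ring,
          term2 hα n z]
        ring
    _ = z^2/(4*(α+1)*(α+2)) * modI (α+2) z := by
        rw [tsum_mul_left]
        rw [show α + 2 = α + 1 + 1 by ring]
        rw [modI_eq, Complex.Gamma_add_one (α+1+1) (by rw [show α+1+1 = α+2 by ring]; exact h2),
          Complex.Gamma_add_one (α+1) h1]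
        have h2' : α + 1 + 1 ≠ 0 := by rw [show α+1+1 = α+2 by ring]; exact h2
        field_simp
        ring

lemma hasDerivAt_modI1 {α : ℂ} (hα : ∀ n : ℕ, α ≠ -((n:ℂ) + 1)) {z : ℂ} (hz : z ≠ 0) :
    HasDerivAt (modI (α+1)) (2*(α+1)/z * (modI α z - modI (α+1) z)) z := by
  have h := hasDerivAt_modI (hα_succ hα) z
  convert h using 1
  rw [modI_sub hα z, show α+1+1 = α+2 by ring]
  have h1 : α + 1 ≠ 0 := by simpa using npa_ne hα 0
  have h2 : α + 2 ≠ 0 := by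
    have := npa_ne hα 1; intro h; apply this; push_cast; linear_combination h
  field_simp
  ring

lemma cast_mul_pow_pred {z : ℂ} (hz : z ≠ 0) (m : ℕ) :
    (m:ℂ) * z^(m-1) = (m:ℂ) * z^m / z := by
  cases m with
  | zero => simp
  | succ m =>
    rw [Nat.add_sub_cancel, pow_succ]
    field_simp

lemma alg1 {z β : ℂ} (hz : z ≠ 0) (a a' b : ℂ) (m : ℕ) :
    (a' * z^m - a * ((m:ℂ) * z^m / z)) / (z^m)^2 + β/z * (b/z^m)
      = (z*a' - (m:ℂ)*a + β*b)/z^(m+1) := by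
  have h := pow_ne_zero m hz
  field_simp
  ring

lemma alg2 {z β : ℂ} (hz : z ≠ 0) (hβ : β ≠ 0) (a b b' : ℂ) (m : ℕ) :
    (b' * z^m - b * ((m:ℂ) * z^m / z)) / (z^m)^2 + z/β * (a / z^m) - β/z * (b/z^m)
      = (z*b' - (m:ℂ)*b + (1/β) * z^2 * a - β*b) / z^(m+1) := by
  have h := pow_ne_zero m hz
  calc (b' * z^m - b * ((m:ℂ) * z^m / z)) / (z^m)^2 + z/β * (a / z^m) - β/z * (b/z^m)
      = ((b' * z^m - b * ((m:ℂ) * z^m / z)) / (z^m)^2 + (-β)/z * (b/z^m)) + z/β * (a / z^m) := by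
        ring
    _ = (z*b' - (m:ℂ)*b + (-β)*b)/z^(m+1) + z/β * (a / z^m) := by rw [alg1 hz]
    _ = (z*b' - (m:ℂ)*b + (1/β) * z^2 * a - β*b) / z^(m+1) := by
        rw [pow_succ]
        field_simp
        ring

lemma laurent {α : ℂ} (h1 : α + 1 ≠ 0) (k : ℕ) :
    ∃ (p q : Polynomial ℂ) (m : ℕ),
      (∀ z : ℂ, z ≠ 0 → (dunklPQ α k).1 z = p.eval z / z^m)
      ∧ (∀ z : ℂ, z ≠ 0 → (dunklPQ α k).2 z = q.eval z / z^m) := by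
  have h2 : (2:ℂ)*(α+1) ≠ 0 := by simpa using h1
  have h3 : (1:ℂ)+α ≠ 0 := by rw [add_comm]; exact h1
  induction k with
  | zero =>
    exact ⟨1, 0, 0, fun z _ => by simp [dunklPQ], fun z _ => by simp [dunklPQ]⟩
  | succ k ih =>
    obtain ⟨p, q, m, hp, hq⟩ := ih
    refine ⟨Polynomial.X * p.derivative - (m : Polynomial ℂ) * p + Polynomial.C (2*(α+1)) * q,
            Polynomial.X * q.derivative - (m : Polynomial ℂ) * q
              + Polynomial.C (1/(2*(α+1))) * Polynomial.X^2 * p - Polynomial.C (2*(α+1)) * q,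
            m+1, ?_, ?_⟩ <;>
    · intro z hz
      have hmem : {w : ℂ | w ≠ 0} ∈ 𝓝 z := isOpen_ne.mem_nhds hz
      have hDP : HasDerivAt (fun w : ℂ => p.eval w / w^m)
          ((p.derivative.eval z * z^m - p.eval z * ((m:ℂ) * z^(m-1))) / (z^m)^2) z :=
        (p.hasDerivAt z).div (hasDerivAt_pow m z) (pow_ne_zero m hz)
      have hDQ : HasDerivAt (fun w : ℂ => q.eval w / w^m)
          ((q.derivative.eval z * z^m - q.eval z * ((m:ℂ) * z^(m-1))) / (z^m)^2) z :=
        (q.hasDerivAt z).div (hasDerivAt_pow m z) (pow_ne_zero m hz)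
      have hEP : (dunklPQ α k).1 =ᶠ[𝓝 z] fun w : ℂ => p.eval w / w^m :=
        Filter.eventuallyEq_of_mem hmem (fun w hw => hp w hw)
      have hEQ : (dunklPQ α k).2 =ᶠ[𝓝 z] fun w : ℂ => q.eval w / w^m :=
        Filter.eventuallyEq_of_mem hmem (fun w hw => hq w hw)
      simp only [dunklPQ, hEP.deriv_eq, hEQ.deriv_eq, hDP.deriv, hDQ.deriv,
        hp z hz, hq z hz, Polynomial.eval_add, Polynomial.eval_sub, Polynomial.eval_mul,
        Polynomial.eval_X, Polynomial.eval_C, Polynomial.eval_pow, Polynomial.eval_natCast]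
      rw [cast_mul_pow_pred hz m]
      first
        | rw [alg1 hz]
        | rw [alg2 hz h2]

lemma PQ_succ_1 (α : ℂ) (k : ℕ) (z : ℂ) :
    (dunklPQ α (k+1)).1 z = deriv (dunklPQ α k).1 z + 2*(α+1)/z * (dunklPQ α k).2 z := rfl

lemma PQ_succ_2 (α : ℂ) (k : ℕ) (z : ℂ) :
    (dunklPQ α (k+1)).2 z = deriv (dunklPQ α k).2 z + z/(2*(α+1)) * (dunklPQ α k).1 z
      - 2*(α+1)/z * (dunklPQ α k).2 z := rfl

lemma diffAt_PQ {α : ℂ} (h1 : α + 1 ≠ 0) (k : ℕ) {z : ℂ} (hz : z ≠ 0) :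
    DifferentiableAt ℂ (dunklPQ α k).1 z ∧ DifferentiableAt ℂ (dunklPQ α k).2 z := by
  obtain ⟨p, q, m, hp, hq⟩ := laurent h1 k
  have hmem : {w : ℂ | w ≠ 0} ∈ 𝓝 z := isOpen_ne.mem_nhds hz
  constructor
  · have hD := (p.hasDerivAt z).div (hasDerivAt_pow m z) (pow_ne_zero m hz)
    exact (hD.congr_of_eventuallyEq
      (Filter.eventuallyEq_of_mem hmem (fun w hw => hp w hw))).differentiableAt
  · have hD := (q.hasDerivAt z).div (hasDerivAt_pow m z) (pow_ne_zero m hz)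
    exact (hD.congr_of_eventuallyEq
      (Filter.eventuallyEq_of_mem hmem (fun w hw => hq w hw))).differentiableAt

lemma main_formula {α : ℂ} (hα : ∀ n : ℕ, α ≠ -((n:ℂ)+1)) (k : ℕ) :
    ∀ z : ℂ, z ≠ 0 → iteratedDeriv k (modI α) z
      = (dunklPQ α k).1 z * modI α z + (dunklPQ α k).2 z * modI (α+1) z := by
  have h1 : α + 1 ≠ 0 := by simpa using npa_ne hα 0
  induction k with
  | zero => intro z hz; simp [dunklPQ, iteratedDeriv_zero]
  | succ k ih =>
    intro z hz
    have hmem : {w : ℂ | w ≠ 0} ∈ 𝓝 z := isOpen_ne.mem_nhds hz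
    have hEq : iteratedDeriv k (modI α) =ᶠ[𝓝 z]
        fun w => (dunklPQ α k).1 w * modI α w + (dunklPQ α k).2 w * modI (α+1) w :=
      Filter.eventuallyEq_of_mem hmem (fun w hw => ih w hw)
    obtain ⟨hP, hQ⟩ := diffAt_PQ h1 k hz
    have hD : HasDerivAt
        (fun w => (dunklPQ α k).1 w * modI α w + (dunklPQ α k).2 w * modI (α+1) w)
        (deriv (dunklPQ α k).1 z * modI α z + (dunklPQ α k).1 z * (z/(2*(α+1)) * modI (α+1) z)
         + (deriv (dunklPQ α k).2 z * modI (α+1) z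
            + (dunklPQ α k).2 z * (2*(α+1)/z * (modI α z - modI (α+1) z)))) z :=
      (hP.hasDerivAt.mul (hasDerivAt_modI hα z)).add (hQ.hasDerivAt.mul (hasDerivAt_modI1 hα hz))
    rw [iteratedDeriv_succ, hEq.deriv_eq, hD.deriv, PQ_succ_1, PQ_succ_2]
    field_simp
    ring

lemma PQ1_1 (α : ℂ) : (dunklPQ α 1).1 = fun _ : ℂ => 0 := by
  funext w
  rw [PQ_succ_1]
  show deriv (fun _ : ℂ => (1:ℂ)) w + 2*(α+1)/w * 0 = 0
  simp

lemma PQ1_2 (α : ℂ) : (dunklPQ α 1).2 = fun w : ℂ => w/(2*(α+1)) := by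
  funext w
  rw [PQ_succ_2]
  show deriv (fun _ : ℂ => (0:ℂ)) w + w/(2*(α+1)) * 1 - 2*(α+1)/w * 0 = _
  simp

lemma algQ4 {z β : ℂ} (hz : z ≠ 0) :
    (1/β - (β-1)/z^2) + z/β * (-(β-1)/z) - β/z * (z/β + (β-1)/z)
      = -(β-1) * (2/β + (β+1)/z^2) := by
  linear_combination (-(2*β-1) * β⁻¹) * mul_inv_cancel₀ hz

lemma explicit {α : ℂ} (h1 : α + 1 ≠ 0) (z : ℂ) (hz : z ≠ 0) :
      (dunklPQ α 1).1 z = 0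
      ∧ (dunklPQ α 2).1 z = 1
      ∧ (dunklPQ α 3).1 z = -(2*α+1)/z
      ∧ (dunklPQ α 4).1 z = (2*α+1)*(2*α+3)/z^2 + 1
      ∧ (dunklPQ α 1).2 z = z/(2*(α+1))
      ∧ (dunklPQ α 2).2 z = -(2*α+1)/(2*(α+1))
      ∧ (dunklPQ α 3).2 z = z/(2*(α+1)) + (2*α+1)/z
      ∧ (dunklPQ α 4).2 z = -(1+2*α) * (1/(1+α) + (3+2*α)/z^2) := by
  have hmem : ∀ {w : ℂ}, w ≠ 0 → {u : ℂ | u ≠ 0} ∈ 𝓝 w := fun hw => isOpen_ne.mem_nhds hw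
  have h2 : (2:ℂ)*(α+1) ≠ 0 := by simpa using h1
  have h3 : (1:ℂ)+α ≠ 0 := by rw [add_comm]; exact h1
  -- level 2, pointwise on z ≠ 0
  have eP2 : ∀ w : ℂ, w ≠ 0 → (dunklPQ α 2).1 w = 1 := by
    intro w hw
    rw [PQ_succ_1, PQ1_1, PQ1_2, deriv_const]
    field_simp
    ring
  have eQ2 : ∀ w : ℂ, w ≠ 0 → (dunklPQ α 2).2 w = -(2*α+1)/(2*(α+1)) := by
    intro w hw
    rw [PQ_succ_2, PQ1_1, PQ1_2]
    have hd : deriv (fun w : ℂ => w/(2*(α+1))) w = 1/(2*(α+1)) := by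
      rw [deriv_div_const, deriv_id'']
    rw [hd]
    field_simp
    ring
  -- level 3
  have eP3 : ∀ w : ℂ, w ≠ 0 → (dunklPQ α 3).1 w = -(2*α+1)/w := by
    intro w hw
    rw [PQ_succ_1]
    have hd : deriv (dunklPQ α 2).1 w = 0 := by
      have : (dunklPQ α 2).1 =ᶠ[𝓝 w] fun _ => (1:ℂ) :=
        Filter.eventuallyEq_of_mem (hmem hw) (fun u hu => eP2 u hu)
      rw [this.deriv_eq, deriv_const]
    rw [hd, eQ2 w hw]
    field_simp
    ring
  have eQ3 : ∀ w : ℂ, w ≠ 0 → (dunklPQ α 3).2 w = w/(2*(α+1)) + (2*α+1)/w := by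
    intro w hw
    rw [PQ_succ_2]
    have hd : deriv (dunklPQ α 2).2 w = 0 := by
      have : (dunklPQ α 2).2 =ᶠ[𝓝 w] fun _ => -(2*α+1)/(2*(α+1)) :=
        Filter.eventuallyEq_of_mem (hmem hw) (fun u hu => eQ2 u hu)
      rw [this.deriv_eq, deriv_const]
    rw [hd, eQ2 w hw, eP2 w hw]
    field_simp [h2]
    ring
  -- level 4 derivative facts at z
  have hd3a : HasDerivAt (fun w : ℂ => -(2*α+1)/w) ((2*α+1)/z^2) z := by
    have h := (hasDerivAt_inv hz).const_mul (-(2*α+1))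
    have hfun : (fun w : ℂ => -(2*α+1)/w) = fun w : ℂ => -(2*α+1) * w⁻¹ := by
      funext w; rw [div_eq_mul_inv]
    rw [hfun, show (2*α+1)/z^2 = -(2*α+1) * -(z^2)⁻¹ by field_simp]
    exact h
  have hd3b : HasDerivAt (fun w : ℂ => w/(2*(α+1)) + (2*α+1)/w)
      (1/(2*(α+1)) - (2*α+1)/z^2) z := by
    have ha : HasDerivAt (fun w : ℂ => w/(2*(α+1))) (1/(2*(α+1))) z := by
      simpa using (hasDerivAt_id z).div_const (2*(α+1))
    have hb : HasDerivAt (fun w : ℂ => (2*α+1)/w) (-(2*α+1)/z^2) z := by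
      have h := (hasDerivAt_inv hz).const_mul (2*α+1)
      have hfun : (fun w : ℂ => (2*α+1)/w) = fun w : ℂ => (2*α+1) * w⁻¹ := by
        funext w; rw [div_eq_mul_inv]
      rw [hfun, show -(2*α+1)/z^2 = (2*α+1) * -(z^2)⁻¹ by field_simp]
      exact h
    have h := ha.add hb
    rw [show 1/(2*(α+1)) - (2*α+1)/z^2 = 1/(2*(α+1)) + -(2*α+1)/z^2 by ring]
    exact h
  have dP3 : deriv (dunklPQ α 3).1 z = (2*α+1)/z^2 := by
    have hE : (dunklPQ α 3).1 =ᶠ[𝓝 z] fun w => -(2*α+1)/w :=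
      Filter.eventuallyEq_of_mem (hmem hz) (fun u hu => eP3 u hu)
    rw [hE.deriv_eq, hd3a.deriv]
  have dQ3 : deriv (dunklPQ α 3).2 z = 1/(2*(α+1)) - (2*α+1)/z^2 := by
    have hE : (dunklPQ α 3).2 =ᶠ[𝓝 z] fun w => w/(2*(α+1)) + (2*α+1)/w :=
      Filter.eventuallyEq_of_mem (hmem hz) (fun u hu => eQ3 u hu)
    rw [hE.deriv_eq, hd3b.deriv]
  refine ⟨by rw [PQ1_1], eP2 z hz, eP3 z hz, ?_, by rw [PQ1_2], eQ2 z hz, eQ3 z hz, ?_⟩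
  · rw [PQ_succ_1, dP3, eQ3 z hz]
    field_simp [h2]
    ring
  · rw [PQ_succ_2, dQ3, eQ3 z hz, eP3 z hz,
      show (2*α+1 : ℂ) = 2*(α+1)-1 from by ring, algQ4 hz]
    field_simp [h2, h3]
    ring

end DunklAux

/-- **Derivatives of `𝕀_α` at zeros of Bessel functions:**
(i) if `s ≠ 0` and `𝕀_{α+1}(is) = 0` then `𝕀_α^{(k)}(is) = 𝕀_α(is) P_k(is)`;
(ii) if `j ≠ 0` and `𝕀_α(ij) = 0` then `𝕀_α^{(k)}(ij) = 𝕀_{α+1}(ij) Q_k(ij)`;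
together with the explicit values of `P_1, …, P_4` and `Q_1, …, Q_4`. -/
theorem iteratedDeriv_modI_at_zeros (α : ℂ) (hα : ∀ n : ℕ, α ≠ -((n:ℂ) + 1)) :
    (∀ s : ℂ, s ≠ 0 → modI (α+1) (Complex.I * s) = 0 → ∀ k : ℕ,
      iteratedDeriv k (modI α) (Complex.I * s)
        = modI α (Complex.I * s) * (dunklPQ α k).1 (Complex.I * s))
    ∧ (∀ j : ℂ, j ≠ 0 → modI α (Complex.I * j) = 0 → ∀ k : ℕ,
      iteratedDeriv k (modI α) (Complex.I * j)
        = modI (α+1) (Complex.I * j) * (dunklPQ α k).2 (Complex.I * j))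
    ∧ (∀ z : ℂ, z ≠ 0 →
      (dunklPQ α 1).1 z = 0
      ∧ (dunklPQ α 2).1 z = 1
      ∧ (dunklPQ α 3).1 z = -(2*α+1)/z
      ∧ (dunklPQ α 4).1 z = (2*α+1)*(2*α+3)/z^2 + 1
      ∧ (dunklPQ α 1).2 z = z/(2*(α+1))
      ∧ (dunklPQ α 2).2 z = -(2*α+1)/(2*(α+1))
      ∧ (dunklPQ α 3).2 z = z/(2*(α+1)) + (2*α+1)/z
      ∧ (dunklPQ α 4).2 z = -(1+2*α) * (1/(1+α) + (3+2*α)/z^2)) := by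
  have h1 : α + 1 ≠ 0 := by simpa using DunklAux.npa_ne hα 0
  refine ⟨?_, ?_, fun z hz => DunklAux.explicit h1 z hz⟩
  · intro s hs h0 k
    have hz : Complex.I * s ≠ 0 := mul_ne_zero Complex.I_ne_zero hs
    rw [DunklAux.main_formula hα k _ hz, h0, mul_zero, add_zero, mul_comm]
  · intro j hj h0 k
    have hz : Complex.I * j ≠ 0 := mul_ne_zero Complex.I_ne_zero hj
    rw [DunklAux.main_formula hα k _ hz, h0, mul_zero, zero_add, mul_comm]
end

section
/- Let λ ∈ ℂ with λ ≠ 0 and λ ≠ −1, fix a value of log(−λ), and set u = log(−λ)/2 (which is neither 0 nor a zero of 𝕀_{1/2}). Then for every n ≥ 0 and every x ∈ ℂ, 𝔈_{n,−1/2,u}(2x−1)/(2^{n−1}(λ+1)) = 𝓔ₙ(x;λ), where 𝓔ₙ(x;λ) is the n-th Apostol–Euler polynomial defined by the generating function 2e^{xt}/(λe^t+1) = ∑_{n=0}^∞ 𝓔ₙ(x;λ) tⁿ/n!. -/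
open Complex Polynomial Finset Filter Topology

/-- uniqueness of power series coefficients -/
lemma hasSum_zero_coeff_eq_zero (c : ℕ → ℂ) {r : ℝ} (hr : 0 < r)
    (h : ∀ t : ℂ, ‖t‖ < r → HasSum (fun n => c n * t ^ n) 0) : ∀ n, c n = 0 := by
  set p := FormalMultilinearSeries.ofScalars ℂ c with hp
  have hrad : ENNReal.ofReal (r/2) ≤ p.radius := by
    rw [show ENNReal.ofReal (r/2) = ((r/2).toNNReal : ENNReal) from rfl]
    apply FormalMultilinearSeries.le_radius_of_summable_norm
    have hs : Summable (fun n => c n * ((r/2 : ℝ) : ℂ) ^ n) :=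
      (h ((r/2 : ℝ) : ℂ) (by rw [Complex.norm_real, Real.norm_eq_abs,
        abs_of_pos (by linarith)]; linarith)).summable
    have hs' : Summable (fun n => ‖c n * ((r/2 : ℝ) : ℂ) ^ n‖) := by
      rwa [summable_norm_iff]
    apply hs'.congr
    intro n
    rw [norm_mul, norm_pow, Complex.norm_real, Real.norm_eq_abs, abs_of_pos (by linarith),
      FormalMultilinearSeries.ofScalars_norm, Real.coe_toNNReal _ (by linarith)]
  have hball : HasFPowerSeriesOnBall (fun _ : ℂ => (0:ℂ)) p 0 (ENNReal.ofReal (r/2)) := by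
    refine ⟨hrad, by rw [ENNReal.ofReal_pos]; linarith, ?_⟩
    intro y hy
    have hy' : ‖y‖ < r/2 := by
      rwa [EMetric.mem_ball, edist_zero_right, ← ofReal_norm,
        ENNReal.ofReal_lt_ofReal_iff (by linarith)] at hy
    have heq : (fun n => p n fun _ => y) = fun n => c n * y ^ n := by
      funext n
      rw [hp, FormalMultilinearSeries.ofScalars_apply_eq, smul_eq_mul]
    rw [heq]
    exact h y (by linarith)
  have hzero : p = 0 := hball.hasFPowerSeriesAt.eq_zero
  intro n
  exact (FormalMultilinearSeries.ofScalars_eq_zero ℂ n).mp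
    (by rw [← hp]; exact congrFun hzero n)



lemma gammaA_ne (n : ℕ) : Complex.Gamma ((n:ℂ) + (-1/2) + 1) ≠ 0 := by
  rw [show ((n:ℂ) + (-1/2) + 1) = (((n:ℝ) + 1/2 : ℝ) : ℂ) by push_cast; ring]
  apply Complex.Gamma_ne_zero_of_re_pos
  rw [Complex.ofReal_re]
  positivity

lemma gammaB_ne (n : ℕ) : Complex.Gamma ((n:ℂ) + (-1/2+1) + 1) ≠ 0 := by
  rw [show ((n:ℂ) + (-1/2+1) + 1) = (((n:ℝ) + 3/2 : ℝ) : ℂ) by push_cast; ring]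
  apply Complex.Gamma_ne_zero_of_re_pos
  rw [Complex.ofReal_re]
  positivity

lemma K0 (n : ℕ) : Complex.Gamma ((-1/2 : ℂ)+1) * ((2*n).factorial : ℂ)
    = 2^(2*n) * (n.factorial : ℂ) * Complex.Gamma ((n:ℂ) + (-1/2) + 1) := by
  induction n with
  | zero => norm_num
  | succ n ih =>
    have hne : ((n:ℂ) + (-1/2) + 1) ≠ 0 := by
      rw [show ((n:ℂ) + (-1/2) + 1) = (((n:ℝ) + 1/2 : ℝ) : ℂ) by push_cast; ring,
        Complex.ofReal_ne_zero]
      positivity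
    have hg : Complex.Gamma (((n:ℂ) + (-1/2) + 1) + 1)
        = ((n:ℂ) + (-1/2) + 1) * Complex.Gamma ((n:ℂ) + (-1/2) + 1) :=
      Complex.Gamma_add_one _ hne
    have hcast : ((n:ℂ)+1) + (-1/2) + 1 = ((n:ℂ) + (-1/2) + 1) + 1 := by ring
    have hfac : (2*(n+1)).factorial = (2*n+2) * ((2*n+1) * (2*n).factorial) := by
      have h2 : 2*(n+1) = (2*n+1)+1 := by ring
      rw [h2, Nat.factorial_succ, Nat.factorial_succ]
    rw [hfac, Nat.factorial_succ n]
    push_cast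
    rw [hcast, hg]
    linear_combination (4*(n:ℂ)^2 + 6*n + 2) * ih

lemma K1 (n : ℕ) : Complex.Gamma ((-1/2 : ℂ)+1+1) * ((2*n+1).factorial : ℂ)
    = 2^(2*n) * (n.factorial : ℂ) * Complex.Gamma ((n:ℂ) + (-1/2+1) + 1) := by
  induction n with
  | zero => norm_num
  | succ n ih =>
    have hne : ((n:ℂ) + (-1/2+1) + 1) ≠ 0 := by
      rw [show ((n:ℂ) + (-1/2+1) + 1) = (((n:ℝ) + 3/2 : ℝ) : ℂ) by push_cast; ring,
        Complex.ofReal_ne_zero]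
      positivity
    have hg : Complex.Gamma (((n:ℂ) + (-1/2+1) + 1) + 1)
        = ((n:ℂ) + (-1/2+1) + 1) * Complex.Gamma ((n:ℂ) + (-1/2+1) + 1) :=
      Complex.Gamma_add_one _ hne
    have hcast : ((n:ℂ)+1) + (-1/2+1) + 1 = ((n:ℂ) + (-1/2+1) + 1) + 1 := by ring
    have hfac : (2*(n+1)+1).factorial = (2*n+3) * ((2*n+2) * (2*n+1).factorial) := by
      have h2 : 2*(n+1)+1 = ((2*n+1)+1)+1 := by ring
      rw [h2, Nat.factorial_succ, Nat.factorial_succ]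
    rw [hfac, Nat.factorial_succ n]
    push_cast
    rw [hcast, hg]
    linear_combination (4*(n:ℂ)^2 + 10*n + 6) * ih

lemma modI_neg_half (z : ℂ) : modI (-1/2 : ℂ) z = Complex.cosh z := by
  rw [modI, ← tsum_mul_left, Complex.cosh_eq_tsum]
  apply tsum_congr
  intro n
  have h1 : ((2*n).factorial : ℂ) ≠ 0 := Nat.cast_ne_zero.mpr (Nat.factorial_ne_zero _)
  have h2 : ((n).factorial : ℂ) ≠ 0 := Nat.cast_ne_zero.mpr (Nat.factorial_ne_zero _)
  have h3 := gammaA_ne n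
  have h4 : ((2:ℂ))^(2*n) ≠ 0 := pow_ne_zero _ two_ne_zero
  have k := K0 n
  set G1 := Complex.Gamma ((-1/2:ℂ)+1) with hG1
  set G2 := Complex.Gamma ((n:ℂ)+(-1/2)+1) with hG2
  rw [div_pow]
  field_simp
  linear_combination z^(2*n) * k

lemma modI_half (z : ℂ) : z * modI ((-1/2 : ℂ)+1) z = Complex.sinh z := by
  rw [modI, ← mul_assoc, ← tsum_mul_left, Complex.sinh_eq_tsum]
  apply tsum_congr
  intro n
  have h1 : ((2*n+1).factorial : ℂ) ≠ 0 := Nat.cast_ne_zero.mpr (Nat.factorial_ne_zero _)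
  have h2 : ((n).factorial : ℂ) ≠ 0 := Nat.cast_ne_zero.mpr (Nat.factorial_ne_zero _)
  have h3 := gammaB_ne n
  have h4 : ((2:ℂ))^(2*n) ≠ 0 := pow_ne_zero _ two_ne_zero
  have k := K1 n
  set G1 := Complex.Gamma ((-1/2:ℂ)+1+1) with hG1
  set G2 := Complex.Gamma ((n:ℂ)+(-1/2+1)+1) with hG2
  rw [div_pow]
  field_simp
  linear_combination z^(2*n+1) * k

lemma dunklKer_neg_half (z : ℂ) : dunklKer (-1/2 : ℂ) z = Complex.exp z := by
  rw [dunklKer, modI_neg_half, show (2*((-1/2 : ℂ)+1)) = 1 by norm_num, div_one, modI_half,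
    Complex.cosh_add_sinh]



lemma ascP (k : ℕ) : (ascPochhammer ℂ k).eval ((-1/2:ℂ)+1) * (2^(2*k) * (k.factorial : ℂ))
    = ((2*k).factorial : ℂ) := by
  induction k with
  | zero => simp
  | succ k ih =>
    rw [ascPochhammer_succ_eval]
    have hfac : (2*(k+1)).factorial = (2*k+2) * ((2*k+1) * (2*k).factorial) := by
      have h2 : 2*(k+1) = (2*k+1)+1 := by ring
      rw [h2, Nat.factorial_succ, Nat.factorial_succ]
    rw [hfac, Nat.factorial_succ k]
    push_cast
    linear_combination (4*(k:ℂ)^2+6*k+2) * ih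

lemma gamFact (n : ℕ) : gamDunkl (-1/2 : ℂ) n = (n.factorial : ℂ) := by
  rcases Nat.even_or_odd n with ⟨k, hk⟩ | ⟨k, hk⟩
  · have hn : n = 2*k := by omega
    subst hn
    rw [gamDunkl, if_pos (by omega)]
    have hdiv : 2*k/2 = k := by omega
    rw [hdiv]
    have := ascP k
    rw [pow_mul] at this ⊢
    push_cast
    linear_combination this
  · subst hk
    rw [gamDunkl, if_neg (by omega)]
    have hdiv : (2*k+1)/2 = k := by omega
    rw [hdiv, ascPochhammer_succ_eval]
    have h1 : (2*k+1).factorial = (2*k+1) * (2*k).factorial := Nat.factorial_succ _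
    rw [h1]
    have := ascP k
    push_cast at this ⊢
    have hpow : (2:ℂ)^(2*k+1) = 2 * 2^(2*k) := by rw [pow_succ]; ring
    rw [hpow]
    linear_combination (2*(k:ℂ)+1) * this

lemma expKey (lam u x t : ℂ) (hu : Complex.exp (2*u) = -lam)
    (hden : lam * Complex.exp (2*t) + 1 ≠ 0) :
    Complex.sinh u * Complex.exp ((2*x-1)*t) / Complex.sinh (t+u)
      = (lam+1)/2 * (2 * Complex.exp (x*(2*t)) / (lam * Complex.exp (2*t) + 1)) := by
  have het : Complex.exp t ≠ 0 := Complex.exp_ne_zero t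
  have heu : Complex.exp u ≠ 0 := Complex.exp_ne_zero u
  have hex : Complex.exp (x*t) ≠ 0 := Complex.exp_ne_zero _
  have h2t : Complex.exp (2*t) = Complex.exp t * Complex.exp t := by
    rw [← Complex.exp_add]; ring_nf
  have h2u : Complex.exp (2*u) = Complex.exp u * Complex.exp u := by
    rw [← Complex.exp_add]; ring_nf
  have hlam : lam = -(Complex.exp u * Complex.exp u) := by rw [← h2u, hu]; ring
  have hxt : Complex.exp ((2*x-1)*t) = Complex.exp (x*t) * Complex.exp (x*t) / Complex.exp t := by
    rw [eq_div_iff het, ← Complex.exp_add, ← Complex.exp_add]; ring_nf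
  have hx2t : Complex.exp (x*(2*t)) = Complex.exp (x*t) * Complex.exp (x*t) := by
    rw [← Complex.exp_add]; ring_nf
  have hsu : Complex.sinh u = (Complex.exp u - (Complex.exp u)⁻¹)/2 := by
    have h := Complex.two_sinh (x := u)
    rw [Complex.exp_neg] at h
    linear_combination h/2
  have hstu : Complex.sinh (t+u) = (Complex.exp t * Complex.exp u
      - (Complex.exp t * Complex.exp u)⁻¹)/2 := by
    have h := Complex.two_sinh (x := t+u)
    rw [Complex.exp_neg, Complex.exp_add] at h
    linear_combination h/2
  have hden' : Complex.exp t * Complex.exp u - (Complex.exp t * Complex.exp u)⁻¹ ≠ 0 := by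
    intro h
    apply hden
    rw [h2t, hlam]
    have h3 : (Complex.exp t * Complex.exp u) * (Complex.exp t * Complex.exp u) = 1 := by
      have := sub_eq_zero.mp h
      field_simp at this
      linear_combination this
    linear_combination -h3
  have hq : Complex.exp t * Complex.exp u * (Complex.exp t * Complex.exp u) - 1 ≠ 0 := by
    intro h
    apply hden
    rw [h2t, hlam]
    linear_combination -h
  have hsinh_ne : Complex.sinh (t+u) ≠ 0 := by
    rw [hstu]
    intro h
    apply hden'
    rcases div_eq_zero_iff.mp h with h1 | h1
    · exact h1
    · norm_num at h1
  have hD2 : -(Complex.exp u * Complex.exp u) * (Complex.exp t * Complex.exp t) + 1 ≠ 0 := by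
    rw [← hlam, ← h2t]
    exact hden
  have hW : Complex.exp u * Complex.exp t * 4 - Complex.exp u ^ 3 * Complex.exp t ^ 3 * 4 ≠ 0 := by
    intro h
    rcases mul_eq_zero.mp (show (Complex.exp u * Complex.exp t * 4)
        * (1 - Complex.exp u ^ 2 * Complex.exp t ^ 2) = 0 by linear_combination h) with h1 | h1
    · exact (mul_ne_zero (mul_ne_zero heu het) (by norm_num)) h1
    · exact hq (by linear_combination -h1)
  have hsu2 : Complex.sinh u = (Complex.exp u * Complex.exp u - 1)/(2*Complex.exp u) := by
    rw [hsu]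
    field_simp
  have hstu2 : Complex.sinh (t+u) = (Complex.exp t * Complex.exp u * (Complex.exp t * Complex.exp u)
      - 1)/(2*(Complex.exp t * Complex.exp u)) := by
    rw [hstu]
    field_simp
  have hD3 : (1:ℂ) - Complex.exp u ^ 2 * Complex.exp t ^ 2 ≠ 0 := by
    intro h; exact hq (by linear_combination -h)
  have hD4 : (1:ℂ) - Complex.exp t ^ 2 * Complex.exp u ^ 2 ≠ 0 := by
    intro h; exact hq (by linear_combination -h)
  rw [div_eq_iff hsinh_ne, hsu2, hstu2, hxt, hx2t, h2t, hlam]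
  field_simp [het, heu, hD2, hD3, hD4]
  have hWW : (Complex.exp u * Complex.exp t * 4 - Complex.exp u ^ 3 * Complex.exp t ^ 3 * 4)⁻¹
      * (Complex.exp u * Complex.exp t * 4 - Complex.exp u ^ 3 * Complex.exp t ^ 3 * 4) = 1 :=
    inv_mul_cancel₀ hW
  rw [eq_div_iff (by intro h; exact hD3 (by linear_combination h))]; ring

/-- **Apostol–Euler–Dunkl polynomials at `α = -1/2` are rescaled Apostol–Euler polynomials:**
let `λ ≠ 0, -1`, fix a logarithm `u` of `-λ` divided by two (i.e. `e^{2u} = -λ`), let `(E n)` be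
the Apostol–Euler–Dunkl polynomials of parameters `α = -1/2` and `u`, and let `(AE n)` be the
Apostol–Euler polynomials, defined by `2e^{xt}/(λe^t+1) = ∑ 𝓔ₙ(x;λ) tⁿ/n!` near `t = 0`. Then
`𝔈_{n,-1/2,u}(2x-1)/(2^{n-1}(λ+1)) = 𝓔ₙ(x;λ)`. -/
theorem apostolEulerDunkl_neg_half_eq_apostolEuler
    (lam : ℂ) (hlam0 : lam ≠ 0) (hlam1 : lam ≠ -1)
    (u : ℂ) (hu : Complex.exp (2*u) = -lam)
    (E : ℕ → Polynomial ℂ)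
    (hE : ∀ x : ℂ, ∃ r > 0, ∀ t : ℂ, ‖t‖ < r →
      HasSum (fun n : ℕ => (E n).eval x * t^n / gamDunkl (-1/2) n)
        (u * modI ((-1/2 : ℂ)+1) u * dunklKer (-1/2) (x*t)
          / ((t+u) * modI ((-1/2 : ℂ)+1) (t+u))))
    (AE : ℕ → Polynomial ℂ)
    (hAE : ∀ x : ℂ, ∃ r > 0, ∀ t : ℂ, ‖t‖ < r →
      HasSum (fun n : ℕ => (AE n).eval x * t^n / (Nat.factorial n : ℂ))
        (2 * Complex.exp (x*t) / (lam * Complex.exp t + 1))) :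
    ∀ n : ℕ, ∀ x : ℂ,
      (E n).eval (2*x - 1) / ((2:ℂ)^((n:ℤ) - 1) * (lam + 1)) = (AE n).eval x := by
  intro n x
  obtain ⟨r1, hr1, h1⟩ := hE (2*x - 1)
  obtain ⟨r2, hr2, h2⟩ := hAE x
  have hlam1' : lam + 1 ≠ 0 := by
    intro h
    exact hlam1 (by linear_combination h)
  have hcontev : ∀ᶠ t : ℂ in 𝓝 0, lam * Complex.exp (2*t) + 1 ≠ 0 := by
    have hc : ContinuousAt (fun t : ℂ => lam * Complex.exp (2*t) + 1) 0 := by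
      fun_prop
    apply hc.eventually_ne
    simpa using hlam1'
  obtain ⟨r3, hr3, h3⟩ := Metric.eventually_nhds_iff.mp hcontev
  set r := min r1 (min (r2/2) r3) with hrdef
  have hrpos : 0 < r := lt_min hr1 (lt_min (by linarith) hr3)
  have hc0 : ∀ m : ℕ, ((E m).eval (2*x-1) / (m.factorial : ℂ)
      - (lam+1)/2 * ((AE m).eval x * 2^m) / (m.factorial : ℂ)) = 0 := by
    apply hasSum_zero_coeff_eq_zero _ hrpos
    intro t ht
    have ht1 : ‖t‖ < r1 := lt_of_lt_of_le ht (min_le_left _ _)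
    have ht2 : ‖2*t‖ < r2 := by
      rw [norm_mul]
      simp only [Complex.norm_ofNat]
      have : ‖t‖ < r2/2 := lt_of_lt_of_le ht ((min_le_right _ _).trans (min_le_left _ _))
      linarith
    have ht3 : lam * Complex.exp (2*t) + 1 ≠ 0 := by
      apply h3
      rw [dist_zero_right]
      exact lt_of_lt_of_le ht ((min_le_right _ _).trans (min_le_right _ _))
    have hA := (h2 (2*t) ht2).mul_left ((lam+1)/2)
    have hB := h1 t ht1
    simp only [gamFact] at hB
    rw [show u * modI ((-1/2 : ℂ)+1) u * dunklKer (-1/2) ((2*x-1)*t)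
          / ((t+u) * modI ((-1/2 : ℂ)+1) (t+u))
        = (lam+1)/2 * (2 * Complex.exp (x*(2*t)) / (lam * Complex.exp (2*t) + 1)) by
      rw [modI_half, modI_half, dunklKer_neg_half]
      exact expKey lam u x t hu ht3] at hB
    have hsub := hB.sub hA
    rw [sub_self] at hsub
    have heq : (fun m : ℕ => ((E m).eval (2*x-1) / (m.factorial : ℂ)
        - (lam+1)/2 * ((AE m).eval x * 2^m) / (m.factorial : ℂ)) * t^m)
        = fun m : ℕ => (E m).eval (2*x-1) * t^m / (m.factorial : ℂ)
          - (lam+1)/2 * ((AE m).eval x * (2*t)^m / (m.factorial : ℂ)) := by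
      funext m
      rw [mul_pow]
      ring
    rw [heq]
    exact hsub
  have hcn := hc0 n
  have hfn : ((n.factorial : ℂ)) ≠ 0 := Nat.cast_ne_zero.mpr (Nat.factorial_ne_zero n)
  have h2n : ((2:ℂ))^n ≠ 0 := pow_ne_zero _ two_ne_zero
  have hEn : (E n).eval (2*x-1) = (lam+1)/2 * ((AE n).eval x * 2^n) := by
    rw [div_sub_div_same, _root_.div_eq_zero_iff, or_iff_left hfn, sub_eq_zero] at hcn
    exact hcn
  have hzp : (2:ℂ)^((n:ℤ)-1) = 2^n / 2 := by
    rw [zpow_sub₀ (two_ne_zero), zpow_one, zpow_natCast]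
  rw [hzp, hEn]
  field_simp
end
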